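/- arXiv:1607.04001 — 6 statements merged into one kernel-verified Lean document; each statement's English description precedes it below -/
import Mathlib

section
/- Let m, n ≥ 1. If there is a hamiltonian path from the square ι to the square τ in the m×n projective checkerboard B(m,n), then there is a hamiltonian path from the inverse of τ to the inverse of ι in B(m,n). -/
namespace ProjBoard

/-- `(p,q)` is a square of the `m × n` board. -/
def Sq (m n : ℕ) (s : ℕ × ℕ) : Prop := s.1 < m ∧ s.2 < n

/-- The east move on the `m × n` projective checkerboard. -/
def moveE (m n : ℕ) (s : ℕ × ℕ) : ℕ × ℕ :=
  if s.1 < m - 1 then (s.1 + 1, s.2) else (0, n - 1 - s.2)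

/-- The north move on the `m × n` projective checkerboard. -/
def moveN (m n : ℕ) (s : ℕ × ℕ) : ℕ × ℕ :=
  if s.2 < n - 1 then (s.1, s.2 + 1) else (m - 1 - s.1, 0)

/-- Directed edge of the board: from a square `s` to `sE` or `sN`. -/
def Edge (m n : ℕ) (s t : ℕ × ℕ) : Prop :=
  Sq m n s ∧ (t = moveE m n s ∨ t = moveN m n s)

/-- A hamiltonian path, recorded as the list of squares it visits in order. -/
def IsHamPath (m n : ℕ) (l : List (ℕ × ℕ)) : Prop :=
  l.Chain' (Edge m n) ∧ l.Nodup ∧ ∀ s, Sq m n s ↔ s ∈ l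

/-- A hamiltonian path with initial square `ι` and terminal square `τ`. -/
def HamPathFromTo (m n : ℕ) (ι τ : ℕ × ℕ) (l : List (ℕ × ℕ)) : Prop :=
  IsHamPath m n l ∧ l.head? = some ι ∧ l.getLast? = some τ

/-- The square `s` travels east in the hamiltonian path `l`:
the edge from `s` to `sE` belongs to `l`. -/
def TravelsEast (m n : ℕ) (l : List (ℕ × ℕ)) (s : ℕ × ℕ) : Prop :=
  ∃ i : ℕ, l[i]? = some s ∧ l[i + 1]? = some (moveE m n s)

/-- The square `s` travels north in the hamiltonian path `l`:
the edge from `s` to `sN` belongs to `l`. -/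
def TravelsNorth (m n : ℕ) (l : List (ℕ × ℕ)) (s : ℕ × ℕ) : Prop :=
  ∃ i : ℕ, l[i]? = some s ∧ l[i + 1]? = some (moveN m n s)

/-- Two squares lie in the same (direction-forcing) diagonal. -/
def SameDiag (m n : ℕ) (s t : ℕ × ℕ) : Prop :=
  s.1 + s.2 = t.1 + t.2 ∨ s.1 + s.2 + (t.1 + t.2) = m + n - 3

/-- The southeasternmost square of the subdiagonal `S_b`. -/
def tauPlus (m n b : ℕ) : ℕ × ℕ :=
  if b ≤ m - 1 then (b, 0) else (m - 1, b - (m - 1))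

/-- The inverse of a square. -/
def inv (m n : ℕ) (s : ℕ × ℕ) : ℕ × ℕ := (m - 1 - s.1, n - 1 - s.2)

lemma sq_inv {m n : ℕ} (hm : 1 ≤ m) (hn : 1 ≤ n) (s : ℕ × ℕ) : Sq m n (inv m n s) := by
  constructor <;> simp [inv] <;> omega

lemma inv_inv {m n : ℕ} {s : ℕ × ℕ} (hs : Sq m n s) : inv m n (inv m n s) = s := by
  obtain ⟨a, b⟩ := s
  obtain ⟨h1, h2⟩ := hs
  simp only [inv, Prod.mk.injEq]
  omega

lemma edge_rev {m n : ℕ} (hm : 1 ≤ m) (hn : 1 ≤ n) {s t : ℕ × ℕ}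
    (h : Edge m n s t) : Edge m n (inv m n t) (inv m n s) := by
  obtain ⟨⟨h1, h2⟩, hmv | hmv⟩ := h <;> subst hmv
  · refine ⟨sq_inv hm hn _, Or.inl ?_⟩
    simp only [inv, moveE]
    split_ifs with ha hb hb <;> dsimp only at hb ⊢ <;>
      simp only [Prod.mk.injEq, and_true, true_and] <;> omega
  · refine ⟨sq_inv hm hn _, Or.inr ?_⟩
    simp only [inv, moveN]
    split_ifs with ha hb hb <;> dsimp only at hb ⊢ <;>
      simp only [Prod.mk.injEq, and_true, true_and] <;> omega

theorem inverseHP (m n : ℕ) (hm : 1 ≤ m) (hn : 1 ≤ n) (ι τ : ℕ × ℕ)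
    (h : ∃ l, HamPathFromTo m n ι τ l) :
    ∃ l, HamPathFromTo m n (m - 1 - τ.1, n - 1 - τ.2) (m - 1 - ι.1, n - 1 - ι.2) l := by
  obtain ⟨l, ⟨⟨hchain, hnd, hmem⟩, hhead, hlast⟩⟩ := h
  refine ⟨(l.map (inv m n)).reverse, ⟨⟨?_, ?_, ?_⟩, ?_, ?_⟩⟩
  · rw [List.Chain', List.isChain_reverse, List.isChain_map]
    exact (show List.IsChain _ l from hchain).imp fun a b hab => edge_rev hm hn hab
  · rw [List.nodup_reverse]
    refine List.Nodup.map_on ?_ hnd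
    intro x hx y hy hxy
    have := congrArg (inv m n) hxy
    rwa [inv_inv ((hmem x).mpr hx), inv_inv ((hmem y).mpr hy)] at this
  · intro s
    simp only [List.mem_reverse, List.mem_map]
    constructor
    · intro hs
      exact ⟨inv m n s, (hmem _).mp (sq_inv hm hn s), inv_inv hs⟩
    · rintro ⟨t, ht, rfl⟩
      exact sq_inv hm hn t
  · rw [List.head?_reverse, List.getLast?_map, hlast]
    rfl
  · rw [List.getLast?_reverse, List.head?_map, hhead]
    rfl

end ProjBoard
end

section
/- Let m, n ≥ 1 and let H be a hamiltonian path in the m×n projective checkerboard B(m,n). Then for every non-terminal diagonal D of B(m,n), either every square of D travels north in H, or every square of D travels east in H. -/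
namespace ProjBoard

/-! ### Auxiliary machinery -/

/-- The north-predecessor of the east-move of `s`. -/
def Pm (m n : ℕ) (s : ℕ × ℕ) : ℕ × ℕ :=
  if s.1 < m - 1 then
    if 1 ≤ s.2 then (s.1 + 1, s.2 - 1) else (m - 2 - s.1, n - 1)
  else
    if s.2 < n - 1 then (0, n - 2 - s.2) else (m - 1, n - 1)

lemma sameDiag_refl (m n : ℕ) (s : ℕ × ℕ) : SameDiag m n s s := Or.inl rfl

lemma sameDiag_symm {m n : ℕ} {s t : ℕ × ℕ} (h : SameDiag m n s t) : SameDiag m n t s := by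
  rcases h with h | h
  · exact Or.inl h.symm
  · exact Or.inr (by omega)

lemma sameDiag_trans {m n : ℕ} {s t u : ℕ × ℕ} (h1 : SameDiag m n s t)
    (h2 : SameDiag m n t u) : SameDiag m n s u := by
  unfold SameDiag at *; omega

lemma lt_of_sameDiag {m n : ℕ} {s t : ℕ × ℕ} (hd : SameDiag m n s t)
    (h : s.1 + s.2 < m + n - 2) : t.1 + t.2 < m + n - 2 := by
  unfold SameDiag at hd; omega

lemma sq_Pm {m n : ℕ} (hm : 1 ≤ m) (hn : 1 ≤ n) {s : ℕ × ℕ} (hs : Sq m n s) :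
    Sq m n (Pm m n s) := by
  obtain ⟨p, q⟩ := s
  obtain ⟨h1, h2⟩ := hs
  simp only [Sq, Pm] at *
  split_ifs <;> (try dsimp only) <;> omega

lemma sameDiag_Pm {m n : ℕ} {s : ℕ × ℕ} (hs : Sq m n s) : SameDiag m n s (Pm m n s) := by
  obtain ⟨p, q⟩ := s
  obtain ⟨h1, h2⟩ := hs
  simp only [Sq, Pm, SameDiag] at *
  split_ifs <;> (try dsimp only) <;> omega

lemma moveN_Pm {m n : ℕ} (hm : 1 ≤ m) (hn : 1 ≤ n) {s : ℕ × ℕ} (hs : Sq m n s) :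
    moveN m n (Pm m n s) = moveE m n s := by
  obtain ⟨p, q⟩ := s
  obtain ⟨h1, h2⟩ := hs
  simp only [Sq] at *
  simp only [Pm, moveN, moveE]
  split_ifs <;> simp_all [Prod.mk.injEq] <;> omega

/-- The northwesternmost square of the subdiagonal `S_a`. -/
def nw (m n a : ℕ) : ℕ × ℕ := (a - (n - 1), a - (a - (n - 1)))

lemma reach_trans {α : Type*} {f : α → α} {x y z : α}
    (h1 : ∃ k, f^[k] x = y) (h2 : ∃ k, f^[k] y = z) : ∃ k, f^[k] x = z := by
  obtain ⟨a, ha⟩ := h1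
  obtain ⟨b, hb⟩ := h2
  exact ⟨b + a, by rw [Function.iterate_add_apply, ha, hb]⟩

lemma slide {m n : ℕ} : ∀ (d p q : ℕ), p + d < m → d ≤ q → q < n →
    (Pm m n)^[d] (p, q) = (p + d, q - d) := by
  intro d
  induction d with
  | zero => intro p q _ _ _; simp
  | succ d ih =>
    intro p q h1 h2 h3
    have hP : Pm m n (p, q) = (p + 1, q - 1) := by
      simp only [Pm]
      split_ifs <;> first | rfl | (exfalso; omega)
    rw [Function.iterate_succ_apply, hP, ih (p + 1) (q - 1) (by omega) (by omega) (by omega)]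
    simp only [Prod.mk.injEq]
    omega

lemma toSE {m n : ℕ} (p q : ℕ) (h1 : p < m) (h2 : q < n) :
    ∃ k, (Pm m n)^[k] (p, q) = tauPlus m n (p + q) := by
  refine ⟨(p + q - (p + q - (m - 1))) - p, ?_⟩
  rw [slide _ _ _ (by omega) (by omega) h2]
  unfold tauPlus
  split_ifs <;> simp only [Prod.mk.injEq] <;> omega

lemma jump {m n : ℕ} (hm : 1 ≤ m) (hn : 1 ≤ n) (a : ℕ) (ha : a ≤ m + n - 3) :
    Pm m n (tauPlus m n a) = nw m n (m + n - 3 - a) := by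
  unfold tauPlus nw Pm
  split_ifs <;> (try simp_all [Prod.mk.injEq]) <;> omega

lemma fromNW {m n : ℕ} (a t1 t2 : ℕ) (h1 : t1 < m) (h2 : t2 < n) (hsum : t1 + t2 = a) :
    ∃ k, (Pm m n)^[k] (nw m n a) = (t1, t2) := by
  refine ⟨t1 - (a - (n - 1)), ?_⟩
  unfold nw
  rw [slide _ _ _ (by omega) (by omega) (by omega)]
  simp only [Prod.mk.injEq]
  omega

lemma cover {m n : ℕ} (hm : 1 ≤ m) (hn : 1 ≤ n) (s t : ℕ × ℕ) (hs : Sq m n s)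
    (ht : Sq m n t) (hlt : s.1 + s.2 < m + n - 2) (hd : SameDiag m n s t) :
    ∃ k, (Pm m n)^[k] s = t := by
  obtain ⟨p, q⟩ := s
  obtain ⟨t1, t2⟩ := t
  simp only [Sq, SameDiag] at hs ht hlt hd
  obtain ⟨h1, h2⟩ := hs
  obtain ⟨h3, h4⟩ := ht
  have r1 : ∃ k, (Pm m n)^[k] (p, q) = tauPlus m n (p + q) := toSE p q h1 h2
  have hj1 : Pm m n (tauPlus m n (p + q)) = nw m n (m + n - 3 - (p + q)) :=
    jump hm hn (p + q) (by omega)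
  have r2 : ∃ k, (Pm m n)^[k] (tauPlus m n (p + q)) = nw m n (m + n - 3 - (p + q)) :=
    ⟨1, by simpa using hj1⟩
  by_cases hcase : t1 + t2 = m + n - 3 - (p + q)
  · exact reach_trans (reach_trans r1 r2) (fromNW _ t1 t2 h3 h4 hcase)
  · have hsum : t1 + t2 = p + q := by omega
    have r3 : ∃ k, (Pm m n)^[k] (nw m n (m + n - 3 - (p + q)))
        = tauPlus m n (m + n - 3 - (p + q)) := by
      have h := toSE (m := m) (n := n) (m + n - 3 - (p + q) - (n - 1))
        (m + n - 3 - (p + q) - (m + n - 3 - (p + q) - (n - 1))) (by omega) (by omega)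
      rw [show m + n - 3 - (p + q) - (n - 1)
          + (m + n - 3 - (p + q) - (m + n - 3 - (p + q) - (n - 1)))
          = m + n - 3 - (p + q) from by omega] at h
      exact h
    have r4 : ∃ k, (Pm m n)^[k] (tauPlus m n (m + n - 3 - (p + q))) = nw m n (p + q) := by
      have h := jump hm hn (m + n - 3 - (p + q)) (by omega)
      rw [show m + n - 3 - (m + n - 3 - (p + q)) = p + q from by omega] at h
      exact ⟨1, by simpa using h⟩
    exact reach_trans (reach_trans (reach_trans (reach_trans r1 r2) r3) r4)
      (fromNW _ t1 t2 h3 h4 hsum)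

lemma travels_of_ne {m n : ℕ} {l : List (ℕ × ℕ)} {τ : ℕ × ℕ}
    (hl : IsHamPath m n l) (hτ : l.getLast? = some τ) (s : ℕ × ℕ) (hs : Sq m n s)
    (hne : s ≠ τ) : TravelsEast m n l s ∨ TravelsNorth m n l s := by
  obtain ⟨hch, hnd, hmem⟩ := hl
  have hsl : s ∈ l := (hmem s).1 hs
  obtain ⟨i, hi, hgi⟩ := List.mem_iff_getElem.mp hsl
  have h2 : i + 1 < l.length := by
    by_contra h
    apply hne
    have hτ' : l[l.length - 1]? = some τ := by rw [← List.getLast?_eq_getElem?]; exact hτ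
    have hii : l[i]? = some τ := by
      have : i = l.length - 1 := by omega
      rw [this]; exact hτ'
    rw [List.getElem?_eq_getElem hi] at hii
    have : l[i] = τ := Option.some.inj hii
    rw [← hgi, this]
  have hR := List.isChain_iff_getElem.mp hch i (by omega)
  have hR' : Edge m n s (l[i + 1]'h2) := by
    have hgi' : l[i]'(by omega) = s := hgi
    rw [← hgi']
    exact hR
  obtain ⟨-, hEN⟩ := hR'
  have e1 : l[i]? = some s := by rw [List.getElem?_eq_getElem hi, hgi]
  have e2 : l[i + 1]? = some (l[i + 1]'h2) := List.getElem?_eq_getElem h2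
  rcases hEN with h | h
  · exact Or.inl ⟨i, e1, by rw [e2, h]⟩
  · exact Or.inr ⟨i, e1, by rw [e2, h]⟩

lemma prop_east {m n : ℕ} (hm : 1 ≤ m) (hn : 1 ≤ n) {l : List (ℕ × ℕ)} {τ : ℕ × ℕ}
    (hl : IsHamPath m n l) (hτ : l.getLast? = some τ) (s : ℕ × ℕ) (hs : Sq m n s)
    (hPne : Pm m n s ≠ τ) (he : TravelsEast m n l s) : TravelsEast m n l (Pm m n s) := by
  rcases travels_of_ne hl hτ (Pm m n s) (sq_Pm hm hn hs) hPne with h | h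
  · exact h
  · obtain ⟨j, hj1, hj2⟩ := h
    obtain ⟨i, hi1, hi2⟩ := he
    rw [moveN_Pm hm hn hs] at hj2
    have hilt : i + 1 < l.length := (List.getElem?_eq_some_iff.mp hi2).1
    have hij : i + 1 = j + 1 := (List.getElem?_inj hilt hl.2.1).mp (hi2.trans hj2.symm)
    have hij' : i = j := by omega
    have hsp : s = Pm m n s := by
      rw [hij'] at hi1
      exact Option.some.inj (hi1.symm.trans hj1)
    rw [← hsp]
    exact ⟨i, hi1, hi2⟩

theorem diagMustTravel (m n : ℕ) (hm : 1 ≤ m) (hn : 1 ≤ n)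
    (l : List (ℕ × ℕ)) (τ : ℕ × ℕ)
    (hl : IsHamPath m n l) (hτ : l.getLast? = some τ)
    (σ : ℕ × ℕ) (hσ : Sq m n σ) (hnonterm : ¬ SameDiag m n σ τ) :
    (∀ s, Sq m n s → SameDiag m n s σ → TravelsNorth m n l s) ∨
    (∀ s, Sq m n s → SameDiag m n s σ → TravelsEast m n l s) := by
  have hτmem : τ ∈ l := List.mem_of_getLast? hτ
  have hτsq : Sq m n τ := (hl.2.2 τ).2 hτmem
  by_cases hσc : σ.1 + σ.2 < m + n - 2
  · -- main case: σ is not the corner square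
    by_cases hall : ∀ s, Sq m n s → SameDiag m n s σ → TravelsNorth m n l s
    · exact Or.inl hall
    right
    push_neg at hall
    obtain ⟨s0, hs0, hd0, hn0⟩ := hall
    have hs0τ : s0 ≠ τ := by
      intro h
      exact hnonterm (sameDiag_symm (h ▸ hd0))
    have he0 : TravelsEast m n l s0 := by
      rcases travels_of_ne hl hτ s0 hs0 hs0τ with h | h
      · exact h
      · exact absurd h hn0
    have hlt0 : s0.1 + s0.2 < m + n - 2 := lt_of_sameDiag (sameDiag_symm hd0) hσc
    have iter : ∀ k, Sq m n ((Pm m n)^[k] s0) ∧ SameDiag m n σ ((Pm m n)^[k] s0) ∧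
        ((Pm m n)^[k] s0).1 + ((Pm m n)^[k] s0).2 < m + n - 2 ∧
        TravelsEast m n l ((Pm m n)^[k] s0) := by
      intro k
      induction k with
      | zero => exact ⟨hs0, sameDiag_symm hd0, hlt0, he0⟩
      | succ k ih =>
        obtain ⟨h1, h2, h3, h4⟩ := ih
        rw [Function.iterate_succ_apply']
        have hdP : SameDiag m n σ (Pm m n ((Pm m n)^[k] s0)) :=
          sameDiag_trans h2 (sameDiag_Pm h1)
        have hne : Pm m n ((Pm m n)^[k] s0) ≠ τ := by
          intro h
          exact hnonterm (h ▸ hdP)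
        exact ⟨sq_Pm hm hn h1, hdP, lt_of_sameDiag (sameDiag_Pm h1) h3,
          prop_east hm hn hl hτ _ h1 hne h4⟩
    intro t ht hdt
    have hd0t : SameDiag m n s0 t := sameDiag_trans hd0 (sameDiag_symm hdt)
    obtain ⟨k, hk⟩ := cover hm hn s0 t hs0 ht hlt0 hd0t
    have := (iter k).2.2.2
    rwa [hk] at this
  · -- corner case: σ = (m-1, n-1)
    have hσsum : σ.1 + σ.2 = m + n - 2 := by
      obtain ⟨h1, h2⟩ := hσ
      omega
    by_cases hmn : m + n ≤ 2
    · -- m = n = 1 : contradiction with hnonterm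
      exfalso
      apply hnonterm
      left
      obtain ⟨h1, h2⟩ := hσ
      obtain ⟨h3, h4⟩ := hτsq
      omega
    · have honly : ∀ s, Sq m n s → SameDiag m n s σ → s = σ := by
        intro s hssq hsd
        obtain ⟨p, q⟩ := s
        obtain ⟨p', q'⟩ := σ
        simp only [Sq, SameDiag] at *
        simp only [Prod.mk.injEq]
        omega
      have hστ : σ ≠ τ := by
        intro h
        exact hnonterm (h ▸ sameDiag_refl m n σ)
      rcases travels_of_ne hl hτ σ hσ hστ with h | h
      · right
        intro s hssq hsd
        rw [honly s hssq hsd]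
        exact h
      · left
        intro s hssq hsd
        rw [honly s hssq hsd]
        exact h

end ProjBoard
end

section
/- Let m, n ≥ 1 and let H be a hamiltonian path in the m×n projective checkerboard B(m,n) with initial square ι and terminal square τ. Then the unique square σ with σE = ι lies in the same diagonal as τ; that is, the diagonal containing ιE^{−1} (and equivalently ιN^{−1}) is the terminal diagonal of H. -/
namespace ProjBoard

/-! ### Auxiliary lemmas -/

/-- Consecutive pairs of a chain are related. -/
lemma chain'_zip_pairs {α : Type*} {R : α → α → Prop} :
    ∀ {l : List α}, l.Chain' R → ∀ p ∈ l.zip l.tail, R p.1 p.2 := by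
  intro l
  induction l with
  | nil => simp
  | cons a r ih =>
    cases r with
    | nil => simp
    | cons b r' =>
      intro h p hp
      rw [List.Chain', List.isChain_cons_cons] at h
      simp only [List.tail_cons, List.zip_cons_cons, List.mem_cons] at hp
      rcases hp with rfl | hp
      · exact h.1
      · exact ih h.2 p hp

/-- Telescoping crossing count for a list with given head and last. -/
lemma telescope {α : Type*} (A : α → Bool) :
    ∀ (l : List α) (i t : α), l.head? = some i → l.getLast? = some t →
    (l.zip l.tail).countP (fun p => !A p.1 && A p.2) + (if A i = true then 1 else 0)
      = (l.zip l.tail).countP (fun p => A p.1 && !A p.2) + (if A t = true then 1 else 0) := by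
  intro l
  induction l with
  | nil => intro i t h _; simp at h
  | cons a r ih =>
    intro i t hi ht
    simp only [List.head?_cons, Option.some_inj] at hi
    subst hi
    cases r with
    | nil =>
      simp only [List.getLast?_singleton, Option.some_inj] at ht
      subst ht
      simp
    | cons b r' =>
      rw [List.getLast?_cons_cons] at ht
      have key := ih b t rfl ht
      simp only [List.tail_cons, List.zip_cons_cons, List.countP_cons] at *
      cases hA : A a <;> cases hB : A b <;>
        simp only [hA, hB] at key ⊢ <;> simp at key ⊢ <;> omega

/-- The central reflection gives equal counts of opposite subdiagonals. -/
lemma count_eq (m n d : ℕ) (hm : 1 ≤ m) (hn : 1 ≤ n) (l : List (ℕ × ℕ))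
    (hnd : l.Nodup) (hcov : ∀ s, Sq m n s ↔ s ∈ l) :
    l.countP (fun s => decide (s.1 + s.2 + d = m + n - 2))
      = l.countP (fun s => decide (s.1 + s.2 = d)) := by
  set r : ℕ × ℕ → ℕ × ℕ := fun s => (m - 1 - s.1, n - 1 - s.2) with hr
  have hsq : ∀ s ∈ l, Sq m n s := fun s hs => (hcov s).mpr hs
  have hrsq : ∀ s, Sq m n s → Sq m n (r s) := by
    intro s hs
    obtain ⟨h1, h2⟩ := hs
    exact ⟨by simp [hr]; omega, by simp [hr]; omega⟩
  have hrr : ∀ s, Sq m n s → r (r s) = s := by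
    intro s hs
    obtain ⟨h1, h2⟩ := hs
    simp only [hr]
    exact Prod.ext (by simp; omega) (by simp; omega)
  have hmem : ∀ x, x ∈ l.map r ↔ x ∈ l := by
    intro x
    constructor
    · intro hx
      obtain ⟨y, hy, rfl⟩ := List.mem_map.mp hx
      exact (hcov _).mp (hrsq y (hsq y hy))
    · intro hx
      refine List.mem_map.mpr ⟨r x, (hcov _).mp (hrsq x (hsq x hx)), hrr x (hsq x hx)⟩
  have hndm : (l.map r).Nodup := by
    refine hnd.map_on ?_
    intro x hx y hy hxy
    have h1 := hsq x hx
    have h2 := hsq y hy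
    obtain ⟨hx1, hx2⟩ := h1
    obtain ⟨hy1, hy2⟩ := h2
    have e1 : m - 1 - x.1 = m - 1 - y.1 := congrArg Prod.fst hxy
    have e2 : n - 1 - x.2 = n - 1 - y.2 := congrArg Prod.snd hxy
    exact Prod.ext (by omega) (by omega)
  have hperm : (l.map r).Perm l := (List.perm_ext_iff_of_nodup hndm hnd).mpr hmem
  calc l.countP (fun s => decide (s.1 + s.2 + d = m + n - 2))
      = (l.map r).countP (fun s => decide (s.1 + s.2 + d = m + n - 2)) :=
        (hperm.countP_eq _).symm
    _ = l.countP ((fun s => decide (s.1 + s.2 + d = m + n - 2)) ∘ r) := List.countP_map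
    _ = l.countP (fun s => decide (s.1 + s.2 = d)) := by
        refine List.countP_congr ?_
        intro x hx
        obtain ⟨h1, h2⟩ := hsq x hx
        simp only [Function.comp, hr, decide_eq_true_eq]
        omega

/-- The key per-edge facts about crossing the `d`-th cut. -/
lemma edge_facts (m n d : ℕ) (hd : 2 * d + 1 ≤ m + n - 2)
    {s t : ℕ × ℕ} (he : Edge m n s t) :
    ((¬(s.1 + s.2 + 1 ≤ d ∨ m + n - 2 ≤ s.1 + s.2 + d) ∧
        (t.1 + t.2 + 1 ≤ d ∨ m + n - 2 ≤ t.1 + t.2 + d)) ↔ t.1 + t.2 + d = m + n - 2)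
    ∧ (((s.1 + s.2 + 1 ≤ d ∨ m + n - 2 ≤ s.1 + s.2 + d) ∧
        ¬(t.1 + t.2 + 1 ≤ d ∨ m + n - 2 ≤ t.1 + t.2 + d)) ↔ t.1 + t.2 = d) := by
  obtain ⟨⟨hp, hq⟩, ht⟩ := he
  rcases ht with rfl | rfl <;>
    · simp only [moveE, moveN]
      split <;> simp <;> omega

theorem iotaEinvInTerminalDiag (m n : ℕ) (hm : 1 ≤ m) (hn : 1 ≤ n)
    (l : List (ℕ × ℕ)) (ι τ σ : ℕ × ℕ)
    (hl : HamPathFromTo m n ι τ l)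
    (hσ : Sq m n σ) (hE : moveE m n σ = ι) :
    SameDiag m n σ τ := by
  obtain ⟨⟨hchain, hnodup, hcov⟩, hhead, hlast⟩ := hl
  -- τ and ι are squares
  have hτl : τ ∈ l := by
    obtain ⟨ys, rfl⟩ := List.getLast?_eq_some_iff.mp hlast
    simp
  have hτsq : Sq m n τ := (hcov τ).mpr hτl
  have hcons : ι :: l.tail = l := List.cons_head?_tail (by rw [hhead]; rfl)
  -- relation between σ and ι
  have hrel : ι.1 + ι.2 = σ.1 + σ.2 + 1 ∨ (σ.1 + σ.2) + (ι.1 + ι.2) = m + n - 2 := by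
    obtain ⟨h1, h2⟩ := hσ
    unfold moveE at hE
    split at hE
    · left; rw [← hE]; show σ.1 + 1 + σ.2 = σ.1 + σ.2 + 1; omega
    · right; rw [← hE]; simp; omega
  have hτb : τ.1 + τ.2 ≤ m + n - 2 := by obtain ⟨a, b⟩ := hτsq; omega
  have hσb : σ.1 + σ.2 ≤ m + n - 2 := by obtain ⟨a, b⟩ := hσ; omega
  -- the key claim, for every cut index d
  have key : ∀ d : ℕ,
      ((τ.1 + τ.2 + 1 ≤ d ∨ m + n - 2 ≤ τ.1 + τ.2 + d) ↔
       (σ.1 + σ.2 + 1 ≤ d ∨ m + n - 2 ≤ σ.1 + σ.2 + d)) := by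
    intro d
    by_cases hd : 2 * d + 1 ≤ m + n - 2
    swap
    · constructor <;> intro _ <;> omega
    -- Boolean predicates
    set A : ℕ × ℕ → Bool := fun s => decide (s.1 + s.2 + 1 ≤ d ∨ m + n - 2 ≤ s.1 + s.2 + d)
      with hA
    set Ti : ℕ × ℕ → Bool := fun s => decide (s.1 + s.2 + d = m + n - 2) with hTi
    set To : ℕ × ℕ → Bool := fun s => decide (s.1 + s.2 = d) with hTo
    have hpairs : ∀ p ∈ l.zip l.tail, Edge m n p.1 p.2 := chain'_zip_pairs hchain
    -- identify crossing counts with subdiagonal counts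
    have hIn : (l.zip l.tail).countP (fun p => !A p.1 && A p.2)
        = (l.zip l.tail).countP (fun p => Ti p.2) := by
      refine List.countP_congr ?_
      intro p hp
      have hf := edge_facts m n d hd (hpairs p hp)
      simp only [hA, hTi, Bool.and_eq_true, Bool.not_eq_true', decide_eq_false_iff_not,
        decide_eq_true_eq]
      exact hf.1
    have hOut : (l.zip l.tail).countP (fun p => A p.1 && !A p.2)
        = (l.zip l.tail).countP (fun p => To p.2) := by
      refine List.countP_congr ?_
      intro p hp
      have hf := edge_facts m n d hd (hpairs p hp)
      simp only [hA, hTo, Bool.and_eq_true, Bool.not_eq_true', decide_eq_false_iff_not,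
        decide_eq_true_eq]
      exact hf.2
    have hsnd : (l.zip l.tail).map Prod.snd = l.tail :=
      List.map_snd_zip (by simp [List.length_tail])
    have hIn2 : (l.zip l.tail).countP (fun p => Ti p.2) = l.tail.countP Ti := by
      rw [show (fun p : (ℕ × ℕ) × ℕ × ℕ => Ti p.2) = (Ti ∘ Prod.snd) from rfl,
        ← List.countP_map, hsnd]
    have hOut2 : (l.zip l.tail).countP (fun p => To p.2) = l.tail.countP To := by
      rw [show (fun p : (ℕ × ℕ) × ℕ × ℕ => To p.2) = (To ∘ Prod.snd) from rfl,
        ← List.countP_map, hsnd]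
    -- global count equality
    have hcount : l.countP Ti = l.countP To := count_eq m n d hm hn l hnodup hcov
    have hTil : l.countP Ti = l.tail.countP Ti + (if Ti ι = true then 1 else 0) := by
      conv_lhs => rw [← hcons]
      rw [List.countP_cons]
    have hTol : l.countP To = l.tail.countP To + (if To ι = true then 1 else 0) := by
      conv_lhs => rw [← hcons]
      rw [List.countP_cons]
    have htel := telescope A l ι τ hhead hlast
    rw [hIn, hOut, hIn2, hOut2] at htel
    -- now pure arithmetic
    have e1 : l.tail.countP Ti + (if Ti ι = true then 1 else 0)
        = l.tail.countP To + (if To ι = true then 1 else 0) := by omega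
    simp only [hA, hTi, hTo, decide_eq_true_eq] at htel e1
    split_ifs at htel e1 <;> omega
  have h1 := key (min (σ.1 + σ.2 + 1) (m + n - 2 - (σ.1 + σ.2)))
  have h2 := key (min (τ.1 + τ.2 + 1) (m + n - 2 - (τ.1 + τ.2)))
  unfold SameDiag
  omega

end ProjBoard
end

section
/- Let m, n ≥ 1 and let H₁ and H₂ be hamiltonian paths in the m×n projective checkerboard B(m,n) that have the same initial square and the same terminal square, and such that for every non-terminal diagonal D, D travels east in H₁ if and only if D travels east in H₂. Then H₁ = H₂ (they consist of exactly the same edges). -/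
namespace ProjBoard

/-! ### Auxiliary geometric development -/

section Geo
variable {m n : ℕ}

lemma sq_moveE (hm : 1 ≤ m) (hn : 1 ≤ n) {s : ℕ × ℕ} (hs : Sq m n s) :
    Sq m n (moveE m n s) := by
  obtain ⟨h1, h2⟩ := hs
  unfold moveE; split <;> exact ⟨by omega, by omega⟩

lemma sq_moveN (hm : 1 ≤ m) (hn : 1 ≤ n) {s : ℕ × ℕ} (hs : Sq m n s) :
    Sq m n (moveN m n s) := by
  obtain ⟨h1, h2⟩ := hs
  unfold moveN; split <;> exact ⟨by omega, by omega⟩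

lemma moveE_inj {s t : ℕ × ℕ} (hs : Sq m n s) (ht : Sq m n t)
    (h : moveE m n s = moveE m n t) : s = t := by
  obtain ⟨p, q⟩ := s; obtain ⟨p', q'⟩ := t
  obtain ⟨h1, h2⟩ := hs; obtain ⟨h3, h4⟩ := ht
  simp only [moveE] at h
  split_ifs at h <;> simp only [Prod.mk.injEq] at h ⊢ <;> omega

lemma moveN_inj {s t : ℕ × ℕ} (hs : Sq m n s) (ht : Sq m n t)
    (h : moveN m n s = moveN m n t) : s = t := by
  obtain ⟨p, q⟩ := s; obtain ⟨p', q'⟩ := t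
  obtain ⟨h1, h2⟩ := hs; obtain ⟨h3, h4⟩ := ht
  simp only [moveN] at h
  split_ifs at h <;> simp only [Prod.mk.injEq] at h ⊢ <;> omega

lemma samediag_refl (s : ℕ × ℕ) : SameDiag m n s s := Or.inl rfl

lemma samediag_symm {s t : ℕ × ℕ} (h : SameDiag m n s t) : SameDiag m n t s := by
  unfold SameDiag at *; omega

lemma samediag_trans {s t u : ℕ × ℕ} (h1 : SameDiag m n s t) (h2 : SameDiag m n t u) :
    SameDiag m n s u := by
  unfold SameDiag at *; omega

/-- If a square is in the diagonal of the corner, it is the corner. -/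
lemma samediag_corner (hm : 1 ≤ m) (hn : 1 ≤ n) {s : ℕ × ℕ} (hs : Sq m n s)
    (h : SameDiag m n s (m - 1, n - 1)) : s = (m - 1, n - 1) := by
  obtain ⟨p, q⟩ := s; obtain ⟨h1, h2⟩ := hs
  unfold SameDiag at h
  simp only [Prod.mk.injEq]
  omega

/-- The next square to the southeast within a diagonal. -/
def nextSE (m n : ℕ) (s : ℕ × ℕ) : ℕ × ℕ :=
  if s.1 + 1 < m ∧ 0 < s.2 then (s.1 + 1, s.2 - 1)
  else if s.1 + 1 < m then (m - 2 - s.1, n - 1)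
  else (0, n - 2 - s.2)

lemma sq_nextSE (hm : 1 ≤ m) (hn : 1 ≤ n) {s : ℕ × ℕ} (hs : Sq m n s) :
    Sq m n (nextSE m n s) := by
  obtain ⟨h1, h2⟩ := hs
  unfold nextSE; split
  · exact ⟨by omega, by omega⟩
  · split <;> exact ⟨by omega, by omega⟩

lemma moveN_nextSE (hm : 1 ≤ m) (hn : 1 ≤ n) {s : ℕ × ℕ} (hs : Sq m n s)
    (hc : s ≠ (m - 1, n - 1)) : moveN m n (nextSE m n s) = moveE m n s := by
  obtain ⟨p, q⟩ := s; obtain ⟨h1, h2⟩ := hs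
  simp only [ne_eq, Prod.mk.injEq, not_and] at hc
  unfold nextSE moveN moveE
  split_ifs <;> dsimp only at * <;> simp only [Prod.mk.injEq, true_and, and_true] at * <;> omega

lemma samediag_nextSE (hm : 1 ≤ m) (hn : 1 ≤ n) {s : ℕ × ℕ} (hs : Sq m n s)
    (hc : s ≠ (m - 1, n - 1)) : SameDiag m n s (nextSE m n s) := by
  obtain ⟨p, q⟩ := s; obtain ⟨h1, h2⟩ := hs
  simp only [ne_eq, Prod.mk.injEq, not_and] at hc
  unfold nextSE SameDiag
  split_ifs <;> dsimp only <;> omega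

/-- The northwesternmost square of the subdiagonal `S_j`. -/
def nwend (n j : ℕ) : ℕ × ℕ := (j - (n - 1), min j (n - 1))

lemma sum_nwend (j : ℕ) : (nwend n j).1 + (nwend n j).2 = j := by
  unfold nwend; dsimp only; omega

lemma sq_nwend (hm : 1 ≤ m) (hn : 1 ≤ n) {j : ℕ} (hj : j ≤ m + n - 3) :
    Sq m n (nwend n j) := by
  unfold nwend Sq; exact ⟨by omega, by omega⟩

lemma walk (hm : 1 ≤ m) (hn : 1 ≤ n) :
    ∀ (r p q : ℕ), Sq m n (p, q) → p + r < m → r ≤ q →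
      (nextSE m n)^[r] (p, q) = (p + r, q - r) := by
  intro r
  induction r with
  | zero => intro p q _ _ _; simp
  | succ r ih =>
    intro p q hs h1 h2
    obtain ⟨hp, hq⟩ := hs
    rw [Function.iterate_succ_apply]
    have hstep : nextSE m n (p, q) = (p + 1, q - 1) := by
      unfold nextSE; rw [if_pos ⟨by omega, by omega⟩]
    rw [hstep, ih (p+1) (q-1) ⟨by omega, by omega⟩ (by omega) (by omega)]
    simp only [Prod.mk.injEq]; omega

lemma from_nw (hm : 1 ≤ m) (hn : 1 ≤ n) {t : ℕ × ℕ} (ht : Sq m n t) :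
    ∃ r, (nextSE m n)^[r] (nwend n (t.1 + t.2)) = t := by
  obtain ⟨p, q⟩ := t; obtain ⟨h1, h2⟩ := ht
  refine ⟨p - ((p + q) - (n - 1)), ?_⟩
  unfold nwend
  dsimp only
  rw [walk hm hn _ _ _ ⟨by omega, by omega⟩ (by omega) (by omega)]
  simp only [Prod.mk.injEq]; omega

lemma to_nw (hm : 1 ≤ m) (hn : 1 ≤ n) {s : ℕ × ℕ} (hs : Sq m n s)
    (hc : s ≠ (m - 1, n - 1)) :
    ∃ k, (nextSE m n)^[k] s = nwend n (m + n - 3 - (s.1 + s.2)) := by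
  obtain ⟨p, q⟩ := s; obtain ⟨h1, h2⟩ := hs
  simp only [ne_eq, Prod.mk.injEq, not_and] at hc
  dsimp only
  have hsum : p + q ≤ m + n - 3 := by omega
  refine ⟨(min (p + q) (m - 1) - p) + 1, ?_⟩
  rw [Function.iterate_succ_apply']
  rw [walk hm hn _ _ _ ⟨h1, h2⟩ (by omega) (by omega)]
  unfold nextSE nwend
  split_ifs <;> simp only [Prod.mk.injEq] <;> omega

/-- Any two squares of the same diagonal are joined by iterating `nextSE`. -/
lemma cyc (hm : 1 ≤ m) (hn : 1 ≤ n) {s t : ℕ × ℕ} (hs : Sq m n s) (ht : Sq m n t)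
    (hd : SameDiag m n s t) (hc : s ≠ (m - 1, n - 1)) :
    ∃ k, (nextSE m n)^[k] s = t := by
  have hK : s.1 + s.2 ≤ m + n - 3 := by
    obtain ⟨p, q⟩ := s; obtain ⟨h1, h2⟩ := hs
    simp only [ne_eq, Prod.mk.injEq, not_and] at hc
    dsimp only; omega
  obtain ⟨k₁, hk₁⟩ := to_nw hm hn hs hc
  rcases hd with hd | hd
  · set j := m + n - 3 - (s.1 + s.2) with hj
    have hjle : j ≤ m + n - 3 := by omega
    have hx : Sq m n (nwend n j) := sq_nwend hm hn hjle
    have hxc : nwend n j ≠ (m - 1, n - 1) := by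
      intro h
      have := sum_nwend (n := n) j
      rw [h] at this
      dsimp only at this
      obtain ⟨p, q⟩ := s; obtain ⟨h1, h2⟩ := hs
      simp only [ne_eq, Prod.mk.injEq, not_and] at hc
      omega
    obtain ⟨k₂, hk₂⟩ := to_nw hm hn hx hxc
    rw [sum_nwend] at hk₂
    have hjj : m + n - 3 - j = t.1 + t.2 := by omega
    rw [hjj] at hk₂
    obtain ⟨r, hr⟩ := from_nw hm hn ht
    exact ⟨r + (k₂ + k₁), by
      rw [Function.iterate_add_apply, Function.iterate_add_apply, hk₁, hk₂, hr]⟩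
  · have hjj : m + n - 3 - (s.1 + s.2) = t.1 + t.2 := by
      obtain ⟨p, q⟩ := t; obtain ⟨h3, h4⟩ := ht
      omega
    rw [hjj] at hk₁
    obtain ⟨r, hr⟩ := from_nw hm hn ht
    exact ⟨r + k₁, by rw [Function.iterate_add_apply, hk₁, hr]⟩

end Geo

/-! ### Auxiliary path development -/

/-- `t` immediately follows `s` in the list `l`. -/
def Succ (l : List (ℕ × ℕ)) (s t : ℕ × ℕ) : Prop :=
  ∃ i : ℕ, l[i]? = some s ∧ l[i + 1]? = some t

section Path
variable {m n : ℕ} {ι τ : ℕ × ℕ} {l : List (ℕ × ℕ)}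

lemma lt_of_some {α : Type*} {l : List α} {i : ℕ} {a : α} (h : l[i]? = some a) :
    i < l.length := by
  by_contra hh
  rw [List.getElem?_eq_none (by omega)] at h
  cases h

lemma idx_unique (nd : l.Nodup) {i j : ℕ} {s : ℕ × ℕ}
    (hi : l[i]? = some s) (hj : l[j]? = some s) : i = j :=
  (List.getElem?_inj (lt_of_some hi) nd).1 (hi.trans hj.symm)

lemma succ_unique (nd : l.Nodup) {s t t' : ℕ × ℕ}
    (h : Succ l s t) (h' : Succ l s t') : t = t' := by
  obtain ⟨i, hi, hi'⟩ := h
  obtain ⟨j, hj, hj'⟩ := h'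
  have := idx_unique nd hi hj
  subst this
  exact Option.some.inj (hi'.symm.trans hj')

lemma pred_unique (nd : l.Nodup) {s s' t : ℕ × ℕ}
    (h : Succ l s t) (h' : Succ l s' t) : s = s' := by
  obtain ⟨i, hi, hi'⟩ := h
  obtain ⟨j, hj, hj'⟩ := h'
  have : i + 1 = j + 1 := idx_unique nd hi' hj'
  have : i = j := by omega
  subst this
  exact Option.some.inj (hi.symm.trans hj)

lemma mem_sq (h : HamPathFromTo m n ι τ l) {s : ℕ × ℕ} (hs : s ∈ l) : Sq m n s :=
  (h.1.2.2 s).2 hs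

lemma sq_tau (h : HamPathFromTo m n ι τ l) : Sq m n τ := by
  apply mem_sq h
  have := h.2.2
  rw [List.getLast?_eq_getElem?] at this
  exact List.mem_iff_getElem?.2 ⟨_, this⟩

lemma succ_ne_init (h : HamPathFromTo m n ι τ l) {s t : ℕ × ℕ}
    (hst : Succ l s t) : t ≠ ι := by
  obtain ⟨i, _, hi'⟩ := hst
  intro he
  rw [he] at hi'
  have h0 : l[0]? = some ι := by
    rw [← List.head?_eq_getElem?]; exact h.2.1
  have := idx_unique h.1.2.1 hi' h0
  omega

lemma no_succ_last (h : HamPathFromTo m n ι τ l) {t : ℕ × ℕ}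
    (hst : Succ l τ t) : False := by
  obtain ⟨i, hi, hi'⟩ := hst
  have hlast : l[l.length - 1]? = some τ := by
    rw [← List.getLast?_eq_getElem?]; exact h.2.2
  have h1 : i = l.length - 1 := idx_unique h.1.2.1 hi hlast
  have h2 : i + 1 < l.length := lt_of_some hi'
  omega

lemma exists_succ (h : HamPathFromTo m n ι τ l) {s : ℕ × ℕ} (hs : Sq m n s)
    (hsτ : s ≠ τ) : ∃ t, Succ l s t ∧ (t = moveE m n s ∨ t = moveN m n s) := by
  have hmem : s ∈ l := (h.1.2.2 s).1 hs
  obtain ⟨i, hi⟩ := List.mem_iff_getElem?.1 hmem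
  have hilen : i < l.length := lt_of_some hi
  have hlast : l[l.length - 1]? = some τ := by
    rw [← List.getLast?_eq_getElem?]; exact h.2.2
  have hne : i ≠ l.length - 1 := by
    intro he; rw [he, hlast] at hi
    exact hsτ (Option.some.inj hi).symm
  have hi1 : i + 1 < l.length := by omega
  have hedge : Edge m n l[i] l[i+1] := List.isChain_iff_getElem.1 h.1.1 i (by omega)
  have hgi : l[i] = s := by
    have := List.getElem?_eq_getElem hilen
    rw [hi] at this
    exact (Option.some.inj this).symm
  refine ⟨l[i+1], ⟨i, hi, List.getElem?_eq_getElem hi1⟩, ?_⟩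
  rw [hgi] at hedge
  exact hedge.2

lemma exists_pred (h : HamPathFromTo m n ι τ l) {t : ℕ × ℕ} (ht : Sq m n t)
    (htι : t ≠ ι) : ∃ s, Sq m n s ∧ Succ l s t ∧ (t = moveE m n s ∨ t = moveN m n s) := by
  have hmem : t ∈ l := (h.1.2.2 t).1 ht
  obtain ⟨j, hj⟩ := List.mem_iff_getElem?.1 hmem
  have hjlen : j < l.length := lt_of_some hj
  have hj0 : j ≠ 0 := by
    intro he; subst he
    have h0 : l[0]? = some ι := by
      rw [← List.head?_eq_getElem?]; exact h.2.1
    rw [h0] at hj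
    exact htι (Option.some.inj hj).symm
  obtain ⟨i, rfl⟩ : ∃ i, j = i + 1 := ⟨j - 1, by omega⟩
  have hedge : Edge m n l[i] l[i+1] := List.isChain_iff_getElem.1 h.1.1 i (by omega)
  have hgj : l[i+1] = t := by
    have := List.getElem?_eq_getElem hjlen
    rw [hj] at this
    exact (Option.some.inj this).symm
  refine ⟨l[i], hedge.1, ⟨i, List.getElem?_eq_getElem (by omega), hj⟩, ?_⟩
  rw [hgj] at hedge; exact hedge.2

/-- Eastward travel propagates to the southeast along a diagonal. -/
lemma prop_east_s5 (hm : 1 ≤ m) (hn : 1 ≤ n) (h : HamPathFromTo m n ι τ l)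
    {s : ℕ × ℕ} (hs : Sq m n s) (hc : s ≠ (m - 1, n - 1))
    (hE : Succ l s (moveE m n s)) (hτ : nextSE m n s ≠ τ) :
    Succ l (nextSE m n s) (moveE m n (nextSE m n s)) := by
  have hx' : Sq m n (nextSE m n s) := sq_nextSE hm hn hs
  obtain ⟨t, hSucc, hopt⟩ := exists_succ h hx' hτ
  rcases hopt with h1 | h1
  · rwa [h1] at hSucc
  · rw [h1, moveN_nextSE hm hn hs hc] at hSucc
    have hss : s = nextSE m n s := pred_unique h.1.2.1 hE hSucc
    rw [← hss]
    exact hE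

/-- If one square of a non-terminal diagonal travels east, the whole diagonal does. -/
lemma all_east (hm : 1 ≤ m) (hn : 1 ≤ n) (h : HamPathFromTo m n ι τ l)
    {s : ℕ × ℕ} (hs : Sq m n s) (hnd : ¬ SameDiag m n s τ)
    (hE : Succ l s (moveE m n s)) :
    ∀ t, Sq m n t → SameDiag m n t s → Succ l t (moveE m n t) := by
  intro t ht hts
  by_cases hcs : s = (m - 1, n - 1)
  · have h1 : t = (m - 1, n - 1) := samediag_corner hm hn ht (hcs ▸ hts)
    rw [show t = s from h1.trans hcs.symm]
    exact hE
  · obtain ⟨k, hk⟩ := cyc hm hn hs ht (samediag_symm hts) hcs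
    suffices H : ∀ k, Sq m n ((nextSE m n)^[k] s) ∧ SameDiag m n s ((nextSE m n)^[k] s) ∧
        Succ l ((nextSE m n)^[k] s) (moveE m n ((nextSE m n)^[k] s)) by
      have := (H k).2.2
      rwa [hk] at this
    intro k
    induction k with
    | zero => exact ⟨hs, samediag_refl s, hE⟩
    | succ k ih =>
      obtain ⟨ih1, ih2, ih3⟩ := ih
      set x := (nextSE m n)^[k] s with hx
      have hxc : x ≠ (m - 1, n - 1) := by
        intro he
        exact hcs (samediag_corner hm hn hs (he ▸ ih2))
      rw [Function.iterate_succ_apply']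
      refine ⟨sq_nextSE hm hn ih1, samediag_trans ih2 (samediag_nextSE hm hn ih1 hxc), ?_⟩
      apply prop_east_s5 hm hn h ih1 hxc ih3
      intro he
      exact hnd (he ▸ samediag_trans ih2 (samediag_nextSE hm hn ih1 hxc))

end Path

section Key
variable {m n : ℕ} {ι τ : ℕ × ℕ}

/-- The central contradiction: the two paths cannot disagree at a square `s`. -/
lemma key (hm : 1 ≤ m) (hn : 1 ≤ n) {l₁ l₂ : List (ℕ × ℕ)}
    (h₁ : HamPathFromTo m n ι τ l₁) (h₂ : HamPathFromTo m n ι τ l₂)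
    (hdiag : ∀ σ, Sq m n σ → ¬ SameDiag m n σ τ →
      ((∀ s, Sq m n s → SameDiag m n s σ → TravelsEast m n l₁ s) ↔
       (∀ s, Sq m n s → SameDiag m n s σ → TravelsEast m n l₂ s)))
    {s : ℕ × ℕ} (hs : Sq m n s) (hsτ : s ≠ τ)
    (hE : Succ l₁ s (moveE m n s)) (hN : Succ l₂ s (moveN m n s))
    (hne : moveE m n s ≠ moveN m n s) : False := by
  classical
  have nd₁ := h₁.1.2.1
  have nd₂ := h₂.1.2.1
  by_cases hst : SameDiag m n s τ
  · -- Case B : s is in the terminal diagonal.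
    have hτs : Sq m n τ := sq_tau h₁
    have hsc : s ≠ (m - 1, n - 1) := by
      intro he
      have h3 : τ = (m - 1, n - 1) := samediag_corner hm hn hτs (samediag_symm (he ▸ hst))
      exact hsτ (he.trans h3.symm)
    obtain ⟨a, ha⟩ := cyc hm hn hs hτs hst hsc
    have hPex : ∃ k, (nextSE m n)^[k] s = τ := ⟨a, ha⟩
    set a₀ := Nat.find hPex with ha₀def
    have ha₀spec : (nextSE m n)^[a₀] s = τ := Nat.find_spec hPex
    have ha₀min : ∀ i < a₀, (nextSE m n)^[i] s ≠ τ := fun i hi => Nat.find_min hPex hi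
    have ha₀pos : 0 < a₀ := by
      rcases Nat.eq_zero_or_pos a₀ with h0 | h0
      · exfalso; apply hsτ; rw [← ha₀spec, h0]; simp
      · exact h0
    have hgood : ∀ i, i ≤ a₀ →
        Sq m n ((nextSE m n)^[i] s) ∧ SameDiag m n s ((nextSE m n)^[i] s) := by
      intro i
      induction i with
      | zero => intro _; exact ⟨hs, samediag_refl s⟩
      | succ i ih =>
        intro hi
        obtain ⟨ih1, ih2⟩ := ih (by omega)
        have hxc : (nextSE m n)^[i] s ≠ (m - 1, n - 1) := fun he =>
          hsc (samediag_corner hm hn hs (he ▸ ih2))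
        rw [Function.iterate_succ_apply']
        exact ⟨sq_nextSE hm hn ih1, samediag_trans ih2 (samediag_nextSE hm hn ih1 hxc)⟩
    have hnc : ∀ i, i ≤ a₀ → (nextSE m n)^[i] s ≠ (m - 1, n - 1) := by
      intro i hi he
      exact hsc (samediag_corner hm hn hs (he ▸ (hgood i hi).2))
    have hdist : ∀ i, i < a₀ → (nextSE m n)^[i] s ≠ (nextSE m n)^[i+1] s := by
      intro i hi he
      have hfixstep : nextSE m n ((nextSE m n)^[i] s) = (nextSE m n)^[i] s :=
        (he.trans (Function.iterate_succ_apply' (nextSE m n) i s)).symm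
      have hfix : ∀ d, (nextSE m n)^[i+d] s = (nextSE m n)^[i] s := by
        intro d
        induction d with
        | zero => rfl
        | succ d ihd =>
          have h4 : i + (d+1) = (i+d) + 1 := by omega
          rw [h4, Function.iterate_succ_apply', ihd, hfixstep]
      have h5 : (nextSE m n)^[a₀] s = (nextSE m n)^[i] s := by
        have h6 : a₀ = i + (a₀ - i) := by omega
        rw [h6, hfix]
      exact ha₀min i hi (h5 ▸ ha₀spec)
    -- The downward induction along the terminal diagonal.
    have main : ∀ d i, i + d + 1 = a₀ →
        (Succ l₁ ((nextSE m n)^[i] s) (moveE m n ((nextSE m n)^[i] s)) ↔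
         Succ l₂ ((nextSE m n)^[i] s) (moveE m n ((nextSE m n)^[i] s))) := by
      intro d
      induction d with
      | zero =>
        intro i hi
        set x := (nextSE m n)^[i] s with hxdef
        have hx : Sq m n x := (hgood i (by omega)).1
        have hxc : x ≠ (m - 1, n - 1) := hnc i (by omega)
        have hmn : moveN m n τ = moveE m n x := by
          have h7 : (nextSE m n)^[i+1] s = τ := by
            rw [show i + 1 = a₀ by omega]; exact ha₀spec
          rw [← h7, Function.iterate_succ_apply', ← hxdef]
          exact moveN_nextSE hm hn hx hxc
        have base : ∀ (l : List (ℕ × ℕ)), HamPathFromTo m n ι τ l →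
            (Succ l x (moveE m n x) ↔ moveE m n x ≠ ι) := by
          intro l hl
          constructor
          · exact fun hS => succ_ne_init hl hS
          · intro hι
            have hy : Sq m n (moveE m n x) := sq_moveE hm hn hx
            obtain ⟨s₀, hs₀, hS₀, hopt⟩ := exists_pred hl hy hι
            rcases hopt with h8 | h8
            · have h9 : s₀ = x := moveE_inj hs₀ hx h8.symm
              rwa [h9] at hS₀
            · rw [← hmn] at h8
              have h9 : s₀ = τ := moveN_inj hs₀ (sq_tau hl) h8.symm
              rw [h9] at hS₀
              exact (no_succ_last hl hS₀).elim
        rw [base l₁ h₁, base l₂ h₂]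
      | succ d ih =>
        intro i hi
        have hiff := ih (i+1) (by omega)
        set x := (nextSE m n)^[i] s with hxdef
        set x' := (nextSE m n)^[i+1] s with hx'def
        have hx : Sq m n x := (hgood i (by omega)).1
        have hxc : x ≠ (m - 1, n - 1) := hnc i (by omega)
        have hx' : Sq m n x' := (hgood (i+1) (by omega)).1
        have hx'τ : x' ≠ τ := ha₀min (i+1) (by omega)
        have hxx' : x ≠ x' := hdist i (by omega)
        have hmn : moveN m n x' = moveE m n x := by
          rw [hx'def, Function.iterate_succ_apply', ← hxdef]
          exact moveN_nextSE hm hn hx hxc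
        have step : ∀ (l : List (ℕ × ℕ)), HamPathFromTo m n ι τ l →
            (Succ l x (moveE m n x) ↔
              (moveE m n x ≠ ι ∧ ¬ Succ l x' (moveE m n x))) := by
          intro l hl
          constructor
          · intro hS
            refine ⟨succ_ne_init hl hS, fun hS' => hxx' (pred_unique hl.1.2.1 hS hS')⟩
          · rintro ⟨hι, hnS'⟩
            have hy : Sq m n (moveE m n x) := sq_moveE hm hn hx
            obtain ⟨s₀, hs₀, hS₀, hopt⟩ := exists_pred hl hy hι
            rcases hopt with h8 | h8
            · have h9 : s₀ = x := moveE_inj hs₀ hx h8.symm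
              rwa [h9] at hS₀
            · rw [← hmn] at h8
              have h9 : s₀ = x' := moveN_inj hs₀ hx' h8.symm
              rw [h9] at hS₀
              exact (hnS' hS₀).elim
        have bridge : Succ l₁ x' (moveE m n x) ↔ Succ l₂ x' (moveE m n x) := by
          by_cases hyy : moveE m n x' = moveE m n x
          · rw [← hyy]; exact hiff
          · have flip : ∀ (l : List (ℕ × ℕ)), HamPathFromTo m n ι τ l →
                (Succ l x' (moveE m n x) ↔ ¬ Succ l x' (moveE m n x')) := by
              intro l hl
              constructor
              · intro hS hS'
                exact hyy (succ_unique hl.1.2.1 hS' hS)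
              · intro hnS
                obtain ⟨t, hS, hopt⟩ := exists_succ hl hx' hx'τ
                rcases hopt with h8 | h8
                · exact ((hnS (h8 ▸ hS)).elim)
                · rw [h8, hmn] at hS
                  exact hS
            rw [flip l₁ h₁, flip l₂ h₂, hiff]
        rw [step l₁ h₁, step l₂ h₂, bridge]
    have hmain0 := main (a₀ - 1) 0 (by omega)
    simp only [Function.iterate_zero_apply] at hmain0
    have h2E : Succ l₂ s (moveE m n s) := hmain0.1 hE
    exact hne (succ_unique nd₂ h2E hN)
  · -- Case A : the diagonal of s is not terminal.
    have lhs : ∀ t, Sq m n t → SameDiag m n t s → TravelsEast m n l₁ t := by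
      intro t ht hts
      exact all_east hm hn h₁ hs hst hE t ht hts
    have rhs := (hdiag s hs hst).1 lhs s hs (samediag_refl s)
    exact hne (succ_unique nd₂ rhs hN)

end Key

theorem uniqueness (m n : ℕ) (hm : 1 ≤ m) (hn : 1 ≤ n)
    (l₁ l₂ : List (ℕ × ℕ)) (ι τ : ℕ × ℕ)
    (h₁ : HamPathFromTo m n ι τ l₁) (h₂ : HamPathFromTo m n ι τ l₂)
    (hdiag : ∀ σ, Sq m n σ → ¬ SameDiag m n σ τ →
      ((∀ s, Sq m n s → SameDiag m n s σ → TravelsEast m n l₁ s) ↔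
       (∀ s, Sq m n s → SameDiag m n s σ → TravelsEast m n l₂ s))) :
    l₁ = l₂ := by
  have nd₁ := h₁.1.2.1
  have nd₂ := h₂.1.2.1
  have hmemiff : ∀ a, a ∈ l₁ ↔ a ∈ l₂ := fun a =>
    (h₁.1.2.2 a).symm.trans (h₂.1.2.2 a)
  have hperm : l₁.Perm l₂ := (List.perm_ext_iff_of_nodup nd₁ nd₂).2 hmemiff
  have hlen : l₁.length = l₂.length := hperm.length_eq
  apply List.ext_getElem?
  intro k
  induction k with
  | zero => rw [← List.head?_eq_getElem?, ← List.head?_eq_getElem?, h₁.2.1, h₂.2.1]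
  | succ k ih =>
    cases hc : l₁[k]? with
    | none =>
      have hk1 : l₁.length ≤ k := by
        by_contra hh
        rw [List.getElem?_eq_getElem (by omega)] at hc
        cases hc
      rw [List.getElem?_eq_none (by omega), List.getElem?_eq_none (by omega)]
    | some s =>
      have hc₂ : l₂[k]? = some s := by rw [← ih]; exact hc
      have hs : Sq m n s := mem_sq h₁ (List.mem_iff_getElem?.2 ⟨k, hc⟩)
      by_cases hsτ : s = τ
      · subst hsτ
        have hlast₁ : l₁[l₁.length - 1]? = some s := by
          rw [← List.getLast?_eq_getElem?]; exact h₁.2.2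
        have hk₁ : k = l₁.length - 1 := idx_unique nd₁ hc hlast₁
        have hklen : k < l₁.length := lt_of_some hc
        rw [List.getElem?_eq_none (by omega), List.getElem?_eq_none (by omega)]
      · obtain ⟨t₁, hS₁, hopt₁⟩ := exists_succ h₁ hs hsτ
        obtain ⟨t₂, hS₂, hopt₂⟩ := exists_succ h₂ hs hsτ
        have hi' : l₁[k+1]? = some t₁ := by
          obtain ⟨i, hi, hi'⟩ := hS₁
          have : i = k := idx_unique nd₁ hi hc
          rwa [this] at hi'
        have hj' : l₂[k+1]? = some t₂ := by
          obtain ⟨j, hj, hj'⟩ := hS₂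
          have : j = k := idx_unique nd₂ hj hc₂
          rwa [this] at hj'
        rw [hi', hj']
        suffices ht : t₁ = t₂ by rw [ht]
        by_cases hEN : moveE m n s = moveN m n s
        · rcases hopt₁ with h8 | h8 <;> rcases hopt₂ with h9 | h9 <;>
            rw [h8, h9] <;> first | rfl | exact hEN | exact hEN.symm
        · rcases hopt₁ with h8 | h8 <;> rcases hopt₂ with h9 | h9
          · rw [h8, h9]
          · exfalso
            exact key hm hn h₁ h₂ hdiag hs hsτ
              (by rw [← h8]; exact hS₁) (by rw [← h9]; exact hS₂) hEN
          · exfalso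
            exact key hm hn h₂ h₁ (fun σ hσ hστ => (hdiag σ hσ hστ).symm) hs hsτ
              (by rw [← h9]; exact hS₂) (by rw [← h8]; exact hS₁) hEN
          · rw [h8, h9]

end ProjBoard
end

section
/- If m, n ≥ 3, then the square (0,0) is not the initial square of any hamiltonian path in the m×n projective checkerboard B(m,n); consequently the diagonal D_{m+n−2} = {(m−1,n−1)} is not the terminal diagonal of any hamiltonian path, and B(m,n) has no hamiltonian cycle. -/
namespace ProjBoard

/-- A hamiltonian cycle, recorded as the list of squares it visits in order
(with an edge from the last square back to the first). -/
def IsHamCycle (m n : ℕ) (l : List (ℕ × ℕ)) : Prop :=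
  IsHamPath m n l ∧ ∃ s t, l.head? = some s ∧ l.getLast? = some t ∧ Edge m n t s

/-! ### Auxiliary definitions -/

/-- The central reflection of the board. -/
def rr (m n : ℕ) (s : ℕ × ℕ) : ℕ × ℕ := (m - 1 - s.1, n - 1 - s.2)

/-- The unique square whose east move lands on `v`. -/
def Ein (m n : ℕ) (v : ℕ × ℕ) : ℕ × ℕ :=
  if 1 ≤ v.1 then (v.1 - 1, v.2) else (m - 1, n - 1 - v.2)

/-- The unique square whose north move lands on `v`. -/
def Nin (m n : ℕ) (v : ℕ × ℕ) : ℕ × ℕ :=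
  if 1 ≤ v.2 then (v.1, v.2 - 1) else (m - 1 - v.1, n - 1)

/-- North-forcing successor. -/
def sigN (m n : ℕ) (s : ℕ × ℕ) : ℕ × ℕ := Ein m n (moveN m n s)

/-- East-forcing successor. -/
def sigE (m n : ℕ) (s : ℕ × ℕ) : ℕ × ℕ := Nin m n (moveE m n s)

def ReachN (m n : ℕ) : ℕ × ℕ → ℕ × ℕ → Prop :=
  Relation.ReflTransGen (fun a b => b = sigN m n a)

def ReachE (m n : ℕ) : ℕ × ℕ → ℕ × ℕ → Prop :=
  Relation.ReflTransGen (fun a b => b = sigE m n a)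

variable {m n : ℕ}

/-! ### Arithmetic lemmas -/

lemma pair_eq {a b c d : ℕ} (h1 : a = c) (h2 : b = d) : (a, b) = (c, d) := by rw [h1, h2]

lemma moveE_tau : moveE m n (m - 1, n - 1) = (0, 0) := by
  simp [moveE]
lemma moveN_tau : moveN m n (m - 1, n - 1) = (0, 0) := by
  simp [moveN]

lemma moveE_sq (hm : 1 ≤ m) (hn : 1 ≤ n) {s} (h : Sq m n s) : Sq m n (moveE m n s) := by
  obtain ⟨p, q⟩ := s; obtain ⟨h1, h2⟩ := h
  simp only [moveE]; split_ifs <;> exact ⟨by omega, by omega⟩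

lemma moveN_sq (hm : 1 ≤ m) (hn : 1 ≤ n) {s} (h : Sq m n s) : Sq m n (moveN m n s) := by
  obtain ⟨p, q⟩ := s; obtain ⟨h1, h2⟩ := h
  simp only [moveN]; split_ifs <;> exact ⟨by omega, by omega⟩

lemma moveE_ne_moveN (hm : 3 ≤ m) (hn : 3 ≤ n) {s} (h : Sq m n s)
    (ht : s ≠ (m - 1, n - 1)) : moveE m n s ≠ moveN m n s := by
  obtain ⟨p, q⟩ := s; obtain ⟨h1, h2⟩ := h
  have hpq : ¬(p = m - 1 ∧ q = n - 1) := by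
    intro ⟨e1, e2⟩; exact ht (by rw [e1, e2])
  simp only [moveE, moveN]
  split_ifs with hA hB hB <;> intro he <;> rw [Prod.mk.injEq] at he <;>
    [omega; omega; omega; exact hpq ⟨by omega, by omega⟩]

lemma Ein_sq (hm : 1 ≤ m) (hn : 1 ≤ n) {v} (h : Sq m n v) : Sq m n (Ein m n v) := by
  obtain ⟨a, b⟩ := v; obtain ⟨h1, h2⟩ := h
  simp only [Ein]; split_ifs <;> exact ⟨by omega, by omega⟩

lemma Nin_sq (hm : 1 ≤ m) (hn : 1 ≤ n) {v} (h : Sq m n v) : Sq m n (Nin m n v) := by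
  obtain ⟨a, b⟩ := v; obtain ⟨h1, h2⟩ := h
  simp only [Nin]; split_ifs <;> exact ⟨by omega, by omega⟩

lemma moveE_Ein (hm : 1 ≤ m) {v} (h : Sq m n v) : moveE m n (Ein m n v) = v := by
  obtain ⟨a, b⟩ := v; obtain ⟨h1, h2⟩ := h
  simp only [Ein, moveE]
  split_ifs <;> rw [Prod.mk.injEq] <;> constructor <;> omega

lemma moveN_Nin (hn : 1 ≤ n) {v} (h : Sq m n v) : moveN m n (Nin m n v) = v := by
  obtain ⟨a, b⟩ := v; obtain ⟨h1, h2⟩ := h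
  simp only [Nin, moveN]
  split_ifs <;> rw [Prod.mk.injEq] <;> constructor <;> omega

lemma rr_sq (hm : 1 ≤ m) (hn : 1 ≤ n) {s} (h : Sq m n s) : Sq m n (rr m n s) :=
  ⟨by simp [rr]; omega, by simp [rr]; omega⟩

lemma rr_rr {s} (h : Sq m n s) : rr m n (rr m n s) = s := by
  obtain ⟨p, q⟩ := s; obtain ⟨h1, h2⟩ := h
  simp only [rr]; rw [Prod.mk.injEq]; constructor <;> omega

lemma rr_00 : rr m n (0, 0) = (m - 1, n - 1) := by simp [rr]

lemma moveN_rr_moveN {s} (h : Sq m n s) :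
    moveN m n (rr m n (moveN m n s)) = rr m n s := by
  obtain ⟨p, q⟩ := s; obtain ⟨h1, h2⟩ := h
  simp only [moveN, rr]
  split_ifs <;> rw [Prod.mk.injEq] <;> constructor <;> omega

lemma moveE_rr_moveE {s} (h : Sq m n s) :
    moveE m n (rr m n (moveE m n s)) = rr m n s := by
  obtain ⟨p, q⟩ := s; obtain ⟨h1, h2⟩ := h
  simp only [moveE, rr]
  split_ifs <;> rw [Prod.mk.injEq] <;> constructor <;> omega

/-! ### Generic list lemmas -/

lemma getElem?_some_lt {α} {l : List α} {i : ℕ} {a : α} (h : l[i]? = some a) :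
    i < l.length := by
  rcases Nat.lt_or_ge i l.length with h' | h'
  · exact h'
  · rw [List.getElem?_eq_none h'] at h; exact absurd h (by simp)

lemma getElem?_val {α} {l : List α} {i : ℕ} {a : α} (h : l[i]? = some a)
    (hi : i < l.length) : l[i] = a := by
  rw [List.getElem?_eq_getElem hi] at h; exact Option.some.inj h

lemma idx_unique_s6 {α} {l : List α} (hnd : l.Nodup) {i j : ℕ} {a : α}
    (h1 : l[i]? = some a) (h2 : l[j]? = some a) : i = j :=
  (List.getElem?_inj (getElem?_some_lt h1) hnd).1 (h1.trans h2.symm)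

lemma chain_rel {α} {R : α → α → Prop} {l : List α} (hc : l.Chain' R) {i : ℕ} {a b : α}
    (h1 : l[i]? = some a) (h2 : l[i+1]? = some b) : R a b := by
  have hi1 : i + 1 < l.length := getElem?_some_lt h2
  have hrel := List.isChain_iff_getElem.1 hc i (by omega)
  rw [getElem?_val h1 (by omega),
    getElem?_val h2 hi1] at hrel
  exact hrel

lemma ham_length {l : List (ℕ × ℕ)} (hnd : l.Nodup) (hcov : ∀ s, Sq m n s ↔ s ∈ l) :
    l.length = m * n := by
  have h1 : l.toFinset = Finset.range m ×ˢ Finset.range n := by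
    ext ⟨p, q⟩
    simp only [List.mem_toFinset, Finset.mem_product, Finset.mem_range, ← hcov, Sq]
  have h2 := List.toFinset_card_of_nodup hnd
  rw [h1, Finset.card_product, Finset.card_range, Finset.card_range] at h2
  omega

/-! ### σ-step lemmas -/

lemma sigN_mid (hn : 3 ≤ n) {a b : ℕ} (ha : 1 ≤ a) (hb : b ≤ n - 2) :
    sigN m n (a, b) = (a - 1, b + 1) := by
  have h1 : moveN m n (a, b) = (a, b + 1) := by
    simp only [moveN]; rw [if_pos (show b < n - 1 by omega)]
  simp only [sigN, h1, Ein]; rw [if_pos (show 1 ≤ (a, b+1).1 from ha)]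

lemma sigN_left (hn : 3 ≤ n) {b : ℕ} (hb : b ≤ n - 2) :
    sigN m n (0, b) = (m - 1, n - 2 - b) := by
  have h1 : moveN m n (0, b) = (0, b + 1) := by
    simp only [moveN]; rw [if_pos (show b < n - 1 by omega)]
  simp only [sigN, h1, Ein]
  rw [if_neg (by simp)]
  exact pair_eq rfl (by omega)

lemma sigN_top (hm : 3 ≤ m) {a : ℕ} (ha : a ≤ m - 2) :
    sigN m n (a, n - 1) = (m - 2 - a, 0) := by
  have h1 : moveN m n (a, n - 1) = (m - 1 - a, 0) := by
    simp only [moveN]; rw [if_neg (by simp)]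
  simp only [sigN, h1, Ein]
  rw [if_pos (show 1 ≤ (m - 1 - a, 0).1 by simp; omega)]
  exact pair_eq (by omega) rfl

lemma reachN_seg (hn : 3 ≤ n) (i p q : ℕ) (hip : i ≤ p) (hq : q + i ≤ n - 1) :
    ReachN m n (p, q) (p - i, q + i) := by
  induction i with
  | zero => simp only [Nat.sub_zero, Nat.add_zero]; exact Relation.ReflTransGen.refl
  | succ i ih =>
    refine Relation.ReflTransGen.tail (ih (by omega) (by omega)) ?_
    rw [sigN_mid hn (by omega) (by omega)]
    exact pair_eq (by omega) (by omega)

lemma reachN_mirror (hm : 3 ≤ m) (hn : 3 ≤ n) {s} (hs : Sq m n s)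
    (ht : s ≠ (m - 1, n - 1)) : ReachN m n s (rr m n (moveN m n s)) := by
  obtain ⟨p, q⟩ := s; obtain ⟨h1, h2⟩ := hs
  by_cases hq : q = n - 1
  · subst hq
    have h3 : rr m n (moveN m n (p, n - 1)) = (p, n - 1) := by
      have e : moveN m n (p, n - 1) = (m - 1 - p, 0) := by
        simp only [moveN]; rw [if_neg (by simp)]
      rw [e]; simp only [rr]; exact pair_eq (by omega) (by omega)
    rw [h3]
    exact Relation.ReflTransGen.refl
  · have hq2 : q ≤ n - 2 := by omega
    have hmv : moveN m n (p, q) = (p, q + 1) := by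
      simp only [moveN]; rw [if_pos (show q < n - 1 by omega)]
    have htgt : rr m n (moveN m n (p, q)) = (m - 1 - p, n - 2 - q) := by
      rw [hmv]; simp only [rr]; exact pair_eq rfl (by omega)
    rw [htgt]
    by_cases hc : p + q ≤ n - 2
    · have t1 : ReachN m n (p, q) (0, q + p) := by
        have := reachN_seg (m := m) hn p p q le_rfl (by omega)
        rwa [show p - p = 0 by omega] at this
      have t2 : ReachN m n (0, q + p) (m - 1, n - 2 - q - p) := by
        refine Relation.ReflTransGen.single ?_
        rw [sigN_left hn (by omega)]; exact pair_eq rfl (by omega)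
      have t3 : ReachN m n (m - 1, n - 2 - q - p) (m - 1 - p, n - 2 - q) := by
        have := reachN_seg (m := m) hn p (m - 1) (n - 2 - q - p) (by omega) (by omega)
        rwa [show n - 2 - q - p + p = n - 2 - q by omega] at this
      exact (t1.trans t2).trans t3
    · have t1 : ReachN m n (p, q) (p - (n - 1 - q), n - 1) := by
        have := reachN_seg (m := m) hn (n - 1 - q) p q (by omega) (by omega)
        rwa [show q + (n - 1 - q) = n - 1 by omega] at this
      have t2 : ReachN m n (p - (n - 1 - q), n - 1) (m - 2 - (p - (n - 1 - q)), 0) := by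
        exact Relation.ReflTransGen.single (by rw [sigN_top hm (by omega)])
      have t3 : ReachN m n (m - 2 - (p - (n - 1 - q)), 0) (m - 1 - p, n - 2 - q) := by
        have := reachN_seg (m := m) hn (n - 2 - q) (m - 2 - (p - (n - 1 - q))) 0
          (by omega) (by omega)
        rw [show m - 2 - (p - (n - 1 - q)) - (n - 2 - q) = m - 1 - p by omega,
          show 0 + (n - 2 - q) = n - 2 - q by omega] at this
        exact this
      exact (t1.trans t2).trans t3

lemma sigE_mid (hm : 3 ≤ m) {a b : ℕ} (hb : 1 ≤ b) (ha : a ≤ m - 2) :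
    sigE m n (a, b) = (a + 1, b - 1) := by
  have h1 : moveE m n (a, b) = (a + 1, b) := by
    simp only [moveE]; rw [if_pos (show a < m - 1 by omega)]
  simp only [sigE, h1, Nin]; rw [if_pos (show 1 ≤ (a + 1, b).2 from hb)]

lemma sigE_bottom (hm : 3 ≤ m) {a : ℕ} (ha : a ≤ m - 2) :
    sigE m n (a, 0) = (m - 2 - a, n - 1) := by
  have h1 : moveE m n (a, 0) = (a + 1, 0) := by
    simp only [moveE]; rw [if_pos (show a < m - 1 by omega)]
  simp only [sigE, h1, Nin]
  rw [if_neg (by simp)]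
  exact pair_eq (by omega) rfl

lemma sigE_right (hn : 3 ≤ n) {b : ℕ} (hb : b ≤ n - 2) :
    sigE m n (m - 1, b) = (0, n - 2 - b) := by
  have h1 : moveE m n (m - 1, b) = (0, n - 1 - b) := by
    simp only [moveE]; rw [if_neg (by simp)]
  simp only [sigE, h1, Nin]
  rw [if_pos (show 1 ≤ (0, n - 1 - b).2 by simp; omega)]
  exact pair_eq rfl (by omega)

lemma reachE_seg (hm : 3 ≤ m) (i p q : ℕ) (hiq : i ≤ q) (hp : p + i ≤ m - 1) :
    ReachE m n (p, q) (p + i, q - i) := by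
  induction i with
  | zero => simp only [Nat.sub_zero, Nat.add_zero]; exact Relation.ReflTransGen.refl
  | succ i ih =>
    refine Relation.ReflTransGen.tail (ih (by omega) (by omega)) ?_
    rw [sigE_mid hm (by omega) (by omega)]
    exact pair_eq (by omega) (by omega)

lemma reachE_mirror (hm : 3 ≤ m) (hn : 3 ≤ n) {s} (hs : Sq m n s)
    (ht : s ≠ (m - 1, n - 1)) : ReachE m n s (rr m n (moveE m n s)) := by
  obtain ⟨p, q⟩ := s; obtain ⟨h1, h2⟩ := hs
  by_cases hp : p = m - 1
  · subst hp
    have h3 : rr m n (moveE m n (m - 1, q)) = (m - 1, q) := by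
      have e : moveE m n (m - 1, q) = (0, n - 1 - q) := by
        simp only [moveE]; rw [if_neg (by simp)]
      rw [e]; simp only [rr]; exact pair_eq (by omega) (by omega)
    rw [h3]
    exact Relation.ReflTransGen.refl
  · have hp2 : p ≤ m - 2 := by omega
    have hmv : moveE m n (p, q) = (p + 1, q) := by
      simp only [moveE]; rw [if_pos (show p < m - 1 by omega)]
    have htgt : rr m n (moveE m n (p, q)) = (m - 2 - p, n - 1 - q) := by
      rw [hmv]; simp only [rr]; exact pair_eq (by omega) rfl
    rw [htgt]
    by_cases hc : p + q ≤ m - 2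
    · have t1 : ReachE m n (p, q) (p + q, 0) := by
        have := reachE_seg (n := n) hm q p q le_rfl (by omega)
        rwa [show q - q = 0 by omega] at this
      have t2 : ReachE m n (p + q, 0) (m - 2 - p - q, n - 1) := by
        refine Relation.ReflTransGen.single ?_
        rw [sigE_bottom hm (by omega)]; exact pair_eq (by omega) rfl
      have t3 : ReachE m n (m - 2 - p - q, n - 1) (m - 2 - p, n - 1 - q) := by
        have := reachE_seg (n := n) hm q (m - 2 - p - q) (n - 1) (by omega) (by omega)
        rwa [show m - 2 - p - q + q = m - 2 - p by omega] at this
      exact (t1.trans t2).trans t3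
    · have t1 : ReachE m n (p, q) (m - 1, q - (m - 1 - p)) := by
        have := reachE_seg (n := n) hm (m - 1 - p) p q (by omega) (by omega)
        rwa [show p + (m - 1 - p) = m - 1 by omega] at this
      have t2 : ReachE m n (m - 1, q - (m - 1 - p)) (0, n - 2 - (q - (m - 1 - p))) := by
        exact Relation.ReflTransGen.single (by rw [sigE_right hn (by omega)])
      have t3 : ReachE m n (0, n - 2 - (q - (m - 1 - p))) (m - 2 - p, n - 1 - q) := by
        have := reachE_seg (n := n) hm (m - 2 - p) 0 (n - 2 - (q - (m - 1 - p)))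
          (by omega) (by omega)
        rw [show (0 : ℕ) + (m - 2 - p) = m - 2 - p by omega,
          show n - 2 - (q - (m - 1 - p)) - (m - 2 - p) = n - 1 - q by omega] at this
        exact this
      exact (t1.trans t2).trans t3

/-! ### The key theorem: no hamiltonian path starts at the origin -/

theorem key_s6 (m n : ℕ) (hm : 3 ≤ m) (hn : 3 ≤ n) (l : List (ℕ × ℕ))
    (hp : IsHamPath m n l) (hh : l.head? = some ((0, 0) : ℕ × ℕ)) : False := by
  obtain ⟨hchain, hnd, hcov⟩ := hp
  have hh0 : l[0]? = some ((0, 0) : ℕ × ℕ) := List.head?_eq_getElem?.symm.trans hh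
  have hlen : l.length = m * n := ham_length hnd hcov
  have hbigL : 2 * (m + n - 2) + 1 ≤ l.length := by
    rw [hlen]
    obtain ⟨a, rfl⟩ : ∃ a, m = a + 3 := ⟨m - 3, by omega⟩
    obtain ⟨b, rfl⟩ : ∃ b, n = b + 3 := ⟨n - 3, by omega⟩
    have : (a + 3) * (b + 3) = a * b + 3 * a + 3 * b + 9 := by ring
    omega
  have hmem : ∀ s, Sq m n s → ∃ i : ℕ, l[i]? = some s :=
    fun s hs => List.mem_iff_getElem?.1 ((hcov s).1 hs)
  have hsqτ : Sq m n (m - 1, n - 1) := ⟨by omega, by omega⟩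
  obtain ⟨iτ, hiτ⟩ := hmem _ hsqτ
  have hlastτ : iτ = l.length - 1 := by
    by_contra hne
    have hiτlt : iτ < l.length := getElem?_some_lt hiτ
    have h2 : iτ + 1 < l.length := by omega
    have hz : l[iτ+1]? = some l[iτ+1] := List.getElem?_eq_getElem h2
    have hedge : Edge m n (m - 1, n - 1) l[iτ+1] := chain_rel hchain hiτ hz
    have hz0 : l[iτ+1] = (0, 0) := by
      rcases hedge.2 with h | h <;> rw [h] <;> simp [moveE_tau, moveN_tau]
    have := idx_unique_s6 hnd (hz0 ▸ hz) hh0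
    omega
  have hτidx : l[l.length - 1]? = some ((m - 1, n - 1) : ℕ × ℕ) := by
    rw [← hlastτ]; exact hiτ
  -- successor existence
  have hsucc : ∀ {i : ℕ} {s : ℕ × ℕ}, l[i]? = some s → s ≠ (m - 1, n - 1) →
      ∃ z, l[i+1]? = some z ∧ Edge m n s z := by
    intro i s hi hsne
    have h1 : i < l.length := getElem?_some_lt hi
    have h2 : i ≠ l.length - 1 := by
      intro e
      rw [e] at hi
      exact hsne (Option.some.inj (hi.symm.trans hτidx))
    have h3 : i + 1 < l.length := by omega
    exact ⟨l[i+1], List.getElem?_eq_getElem h3,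
      chain_rel hchain hi (List.getElem?_eq_getElem h3)⟩
  -- forcing steps
  have forceN : ∀ s, TravelsNorth m n l s → TravelsNorth m n l (sigN m n s) := by
    intro s hTN
    obtain ⟨i, hi, hi1⟩ := hTN
    have hedge : Edge m n s (moveN m n s) := chain_rel hchain hi hi1
    have hSqs : Sq m n s := hedge.1
    have hSqv : Sq m n (moveN m n s) := moveN_sq (by omega) (by omega) hSqs
    have hv0 : moveN m n s ≠ (0, 0) := by
      intro e
      have := idx_unique_s6 hnd (e ▸ hi1) hh0
      omega
    have hsτ : s ≠ (m - 1, n - 1) := by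
      intro e; exact hv0 (by rw [e, moveN_tau])
    have hSqw : Sq m n (Ein m n (moveN m n s)) := Ein_sq (by omega) (by omega) hSqv
    have hMw : moveE m n (Ein m n (moveN m n s)) = moveN m n s := moveE_Ein (by omega) hSqv
    have hwτ : Ein m n (moveN m n s) ≠ (m - 1, n - 1) := by
      intro e; rw [e, moveE_tau] at hMw; exact hv0 hMw.symm
    obtain ⟨j, hj⟩ := hmem _ hSqw
    obtain ⟨z, hz, hezw⟩ := hsucc hj hwτ
    show ∃ i : ℕ, l[i]? = some (Ein m n (moveN m n s)) ∧
      l[i + 1]? = some (moveN m n (Ein m n (moveN m n s)))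
    rcases hezw.2 with hE | hN
    · exfalso
      have hzv : l[j+1]? = some (moveN m n s) := by rw [hz, hE, hMw]
      have hji : j + 1 = i + 1 := idx_unique_s6 hnd hzv hi1
      have hws : Ein m n (moveN m n s) = s := by
        have hj' : l[i]? = some (Ein m n (moveN m n s)) := by
          rw [show i = j by omega]; exact hj
        exact Option.some.inj (hj'.symm.trans hi)
      rw [hws] at hMw
      exact moveE_ne_moveN hm hn hSqs hsτ hMw
    · refine ⟨j, hj, ?_⟩
      rw [hz, hN]
  have forceE : ∀ s, TravelsEast m n l s → TravelsEast m n l (sigE m n s) := by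
    intro s hTE
    obtain ⟨i, hi, hi1⟩ := hTE
    have hedge : Edge m n s (moveE m n s) := chain_rel hchain hi hi1
    have hSqs : Sq m n s := hedge.1
    have hSqv : Sq m n (moveE m n s) := moveE_sq (by omega) (by omega) hSqs
    have hv0 : moveE m n s ≠ (0, 0) := by
      intro e
      have := idx_unique_s6 hnd (e ▸ hi1) hh0
      omega
    have hsτ : s ≠ (m - 1, n - 1) := by
      intro e; exact hv0 (by rw [e, moveE_tau])
    have hSqw : Sq m n (Nin m n (moveE m n s)) := Nin_sq (by omega) (by omega) hSqv
    have hMw : moveN m n (Nin m n (moveE m n s)) = moveE m n s := moveN_Nin (by omega) hSqv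
    have hwτ : Nin m n (moveE m n s) ≠ (m - 1, n - 1) := by
      intro e; rw [e, moveN_tau] at hMw; exact hv0 hMw.symm
    obtain ⟨j, hj⟩ := hmem _ hSqw
    obtain ⟨z, hz, hezw⟩ := hsucc hj hwτ
    show ∃ i : ℕ, l[i]? = some (Nin m n (moveE m n s)) ∧
      l[i + 1]? = some (moveE m n (Nin m n (moveE m n s)))
    rcases hezw.2 with hE | hN
    · refine ⟨j, hj, ?_⟩
      rw [hz, hE]
    · exfalso
      have hzv : l[j+1]? = some (moveE m n s) := by rw [hz, hN, hMw]
      have hji : j + 1 = i + 1 := idx_unique_s6 hnd hzv hi1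
      have hws : Nin m n (moveE m n s) = s := by
        have hj' : l[i]? = some (Nin m n (moveE m n s)) := by
          rw [show i = j by omega]; exact hj
        exact Option.some.inj (hj'.symm.trans hi)
      rw [hws] at hMw
      exact moveE_ne_moveN hm hn hSqs hsτ hMw.symm
  -- closure along reach
  have travelN_reach : ∀ s t, TravelsNorth m n l s → ReachN m n s t →
      TravelsNorth m n l t := by
    intro s t h hr
    induction hr with
    | refl => exact h
    | tail hab hbc ih => exact hbc ▸ forceN _ ih
  have travelE_reach : ∀ s t, TravelsEast m n l s → ReachE m n s t →
      TravelsEast m n l t := by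
    intro s t h hr
    induction hr with
    | refl => exact h
    | tail hab hbc ih => exact hbc ▸ forceE _ ih
  -- mirror lemmas
  have mirrorN : ∀ u, TravelsNorth m n l u →
      ∃ j : ℕ, l[j]? = some (rr m n (moveN m n u)) ∧ l[j+1]? = some (rr m n u) := by
    intro u hTN
    obtain ⟨i0, hi0, hi01⟩ := hTN
    have hSqu : Sq m n u := (chain_rel hchain hi0 hi01).1
    have huτ : u ≠ (m - 1, n - 1) := by
      intro e
      have : moveN m n u = (0, 0) := by rw [e, moveN_tau]
      have := idx_unique_s6 hnd (this ▸ hi01) hh0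
      omega
    obtain ⟨j, hj, hj1⟩ := travelN_reach u _ ⟨i0, hi0, hi01⟩ (reachN_mirror hm hn hSqu huτ)
    refine ⟨j, hj, ?_⟩
    rw [moveN_rr_moveN hSqu] at hj1
    exact hj1
  have mirrorE : ∀ u, TravelsEast m n l u →
      ∃ j : ℕ, l[j]? = some (rr m n (moveE m n u)) ∧ l[j+1]? = some (rr m n u) := by
    intro u hTE
    obtain ⟨i0, hi0, hi01⟩ := hTE
    have hSqu : Sq m n u := (chain_rel hchain hi0 hi01).1
    have huτ : u ≠ (m - 1, n - 1) := by
      intro e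
      have : moveE m n u = (0, 0) := by rw [e, moveE_tau]
      have := idx_unique_s6 hnd (this ▸ hi01) hh0
      omega
    obtain ⟨j, hj, hj1⟩ := travelE_reach u _ ⟨i0, hi0, hi01⟩ (reachE_mirror hm hn hSqu huτ)
    refine ⟨j, hj, ?_⟩
    rw [moveE_rr_moveE hSqu] at hj1
    exact hj1
  -- phase 1: within m+n-2 steps from the start, either a wrap happened or we are on
  -- diagonal t
  have phase1 : ∀ t : ℕ, t ≤ m + n - 2 →
      (∃ a u, a + 1 ≤ t ∧ l[a]? = some u ∧ l[a+1]? = some (rr m n u)) ∨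
      (∃ s : ℕ × ℕ, l[t]? = some s ∧ Sq m n s ∧ s.1 + s.2 = t) := by
    intro t
    induction t with
    | zero =>
      intro _
      exact Or.inr ⟨(0, 0), hh0, ⟨by omega, by omega⟩, rfl⟩
    | succ t ih =>
      intro ht
      rcases ih (by omega) with ⟨a, u, h1, h2, h3⟩ | ⟨⟨p, q⟩, h1, h2, h3⟩
      · exact Or.inl ⟨a, u, by omega, h2, h3⟩
      · have hpm : p < m := h2.1
        have hqn : q < n := h2.2
        have hpq : p + q = t := h3
        have hsτ : ((p, q) : ℕ × ℕ) ≠ (m - 1, n - 1) := by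
          intro e
          rw [Prod.mk.injEq] at e
          omega
        obtain ⟨z, hz, hedge⟩ := hsucc h1 hsτ
        rcases hedge.2 with hE | hN
        · by_cases hb : p < m - 1
          · refine Or.inr ⟨(p + 1, q), ?_, ⟨by omega, by omega⟩, by show p + 1 + q = t + 1; omega⟩
            rw [hz, hE]; simp only [moveE]; rw [if_pos hb]
          · refine Or.inl ⟨t, (p, q), by omega, h1, ?_⟩
            rw [hz, hE]
            simp only [moveE, rr]
            rw [if_neg hb]
            exact congrArg some (pair_eq (by omega) rfl)
        · by_cases hb : q < n - 1
          · refine Or.inr ⟨(p, q + 1), ?_, ⟨by omega, by omega⟩, by show p + (q + 1) = t + 1; omega⟩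
            rw [hz, hN]; simp only [moveN]; rw [if_pos hb]
          · refine Or.inl ⟨t, (p, q), by omega, h1, ?_⟩
            rw [hz, hN]
            simp only [moveN, rr]
            rw [if_neg hb]
            exact congrArg some (pair_eq rfl (by omega))
  rcases phase1 (m + n - 2) le_rfl with ⟨a, u, ha, hu, hu1⟩ | ⟨⟨p, q⟩, h1, h2, h3⟩
  · -- phase 2: after the wrap the path mirrors its own prefix
    have phase2 : ∀ t, t ≤ a → ∀ v, l[a - t]? = some v →
        l[a + 1 + t]? = some (rr m n v) := by
      intro t
      induction t with
      | zero =>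
        intro _ v hv
        rw [Nat.sub_zero] at hv
        have : v = u := Option.some.inj (hv.symm.trans hu)
        subst this
        simpa using hu1
      | succ t ih =>
        intro htA v' hv'
        have he1 : a - (t + 1) + 1 = a - t := by omega
        have hvlt : a - t < l.length := by omega
        have hv : l[a - t]? = some l[a - t] := List.getElem?_eq_getElem hvlt
        have hnext : l[a - (t+1) + 1]? = some l[a - t] := by rw [he1]; exact hv
        have hedge : Edge m n v' l[a - t] := chain_rel hchain hv' hnext
        have ihv : l[a + 1 + t]? = some (rr m n l[a - t]) := ih (by omega) _ hv
        have hgoal : a + 1 + (t + 1) = (a + 1 + t) + 1 := by omega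
        rcases hedge.2 with hE | hN
        · have hTE : TravelsEast m n l v' := ⟨a - (t+1), hv', by rw [he1, ← hE]; exact hv⟩
          obtain ⟨j, hj, hj1⟩ := mirrorE v' hTE
          have hj' : l[j]? = some (rr m n l[a - t]) := by rw [← hE] at hj; exact hj
          have hje : j = a + 1 + t := idx_unique_s6 hnd hj' ihv
          rw [hje] at hj1
          rw [hgoal]
          exact hj1
        · have hTN : TravelsNorth m n l v' := ⟨a - (t+1), hv', by rw [he1, ← hN]; exact hv⟩
          obtain ⟨j, hj, hj1⟩ := mirrorN v' hTN
          have hj' : l[j]? = some (rr m n l[a - t]) := by rw [← hN] at hj; exact hj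
          have hje : j = a + 1 + t := idx_unique_s6 hnd hj' ihv
          rw [hje] at hj1
          rw [hgoal]
          exact hj1
    have hfin := phase2 a le_rfl (0, 0) (by rw [Nat.sub_self]; exact hh0)
    rw [rr_00] at hfin
    have := idx_unique_s6 hnd hfin hτidx
    omega
  · -- the path went straight to the far corner: impossible, too early
    have hτ : ((p, q) : ℕ × ℕ) = (m - 1, n - 1) := by
      have := h2.1
      have := h2.2
      exact pair_eq (by omega) (by omega)
    rw [hτ] at h1
    have := idx_unique_s6 hnd h1 hτidx
    omega

theorem noHamFrom00 (m n : ℕ) (hm : 3 ≤ m) (hn : 3 ≤ n) :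
    (¬ ∃ l, IsHamPath m n l ∧ l.head? = some ((0, 0) : ℕ × ℕ)) ∧
    (¬ ∃ l, IsHamPath m n l ∧ l.getLast? = some ((m - 1, n - 1) : ℕ × ℕ)) ∧
    (¬ ∃ l, IsHamCycle m n l) := by
  have noStart : ¬ ∃ l, IsHamPath m n l ∧ l.head? = some ((0, 0) : ℕ × ℕ) := by
    rintro ⟨l, hp, hh⟩
    exact key_s6 m n hm hn l hp hh
  have noEnd : ¬ ∃ l, IsHamPath m n l ∧ l.getLast? = some ((m - 1, n - 1) : ℕ × ℕ) := by
    rintro ⟨l, hp, hl⟩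
    obtain ⟨hchain, hnd, hcov⟩ := hp
    apply noStart
    refine ⟨(l.reverse).map (rr m n), ⟨?_, ?_, ?_⟩, ?_⟩
    · unfold List.Chain'; rw [List.isChain_map, List.isChain_reverse]
      refine List.IsChain.imp ?_ hchain
      intro a b hab
      have hSqa : Sq m n a := hab.1
      have hSqb : Sq m n b := by
        rcases hab.2 with h | h <;> rw [h]
        · exact moveE_sq (by omega) (by omega) hSqa
        · exact moveN_sq (by omega) (by omega) hSqa
      show Edge m n (rr m n b) (rr m n a)
      refine ⟨rr_sq (by omega) (by omega) hSqb, ?_⟩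
      rcases hab.2 with h | h
      · left; rw [h, moveE_rr_moveE hSqa]
      · right; rw [h, moveN_rr_moveN hSqa]
    · refine List.Nodup.map_on ?_ (List.nodup_reverse.2 hnd)
      intro x hx y hy e
      have hSx : Sq m n x := (hcov x).2 (List.mem_reverse.1 hx)
      have hSy : Sq m n y := (hcov y).2 (List.mem_reverse.1 hy)
      have := congrArg (rr m n) e
      rwa [rr_rr hSx, rr_rr hSy] at this
    · intro s
      constructor
      · intro hs
        exact List.mem_map.2 ⟨rr m n s,
          List.mem_reverse.2 ((hcov _).1 (rr_sq (by omega) (by omega) hs)), rr_rr hs⟩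
      · intro hs
        obtain ⟨x, hx, rfl⟩ := List.mem_map.1 hs
        exact rr_sq (by omega) (by omega) ((hcov x).2 (List.mem_reverse.1 hx))
    · rw [List.head?_map, List.head?_reverse, hl]
      simp [rr]
  refine ⟨noStart, noEnd, ?_⟩
  rintro ⟨l, hp, s, t, hh, hl, hedge⟩
  obtain ⟨hchain, hnd, hcov⟩ := hp
  have hτmem : ((m - 1, n - 1) : ℕ × ℕ) ∈ l := (hcov _).1 ⟨by omega, by omega⟩
  obtain ⟨A, B, rfl⟩ := List.append_of_mem hτmem
  cases B with
  | nil =>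
    have ht : t = (m - 1, n - 1) := by
      have h1 : (A ++ [((m - 1, n - 1) : ℕ × ℕ)]).getLast? = some (m - 1, n - 1) :=
        List.getLast?_concat
      exact Option.some.inj (hl.symm.trans h1)
    subst ht
    have hs : s = (0, 0) := by
      rcases hedge.2 with h | h
      · rw [h, moveE_tau]
      · rw [h, moveN_tau]
    apply noStart
    exact ⟨A ++ [(m - 1, n - 1)], ⟨hchain, hnd, hcov⟩, by rw [hh, hs]⟩
  | cons z B' =>
    obtain ⟨hcA, hcB, hjoin⟩ := List.isChain_append.1 hchain
    have hEτz : Edge m n (m - 1, n - 1) z := (List.isChain_cons_cons.1 hcB).1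
    have hz0 : z = (0, 0) := by
      rcases hEτz.2 with h | h
      · rw [h, moveE_tau]
      · rw [h, moveN_tau]
    subst hz0
    have hperm : (A ++ (m - 1, n - 1) :: (0, 0) :: B').Perm
        (((0, 0) :: B') ++ (A ++ [(m - 1, n - 1)])) := by
      have e1 : A ++ (m - 1, n - 1) :: (0, 0) :: B'
          = (A ++ [((m - 1, n - 1) : ℕ × ℕ)]) ++ ((0, 0) :: B') := by simp
      rw [e1]
      exact List.perm_append_comm
    apply noStart
    refine ⟨((0, 0) :: B') ++ (A ++ [(m - 1, n - 1)]), ⟨?_, hperm.nodup hnd, ?_⟩, ?_⟩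
    · unfold List.Chain'; rw [List.isChain_append]
      refine ⟨(List.isChain_cons_cons.1 hcB).2, ?_, ?_⟩
      · rw [List.isChain_append]
        refine ⟨hcA, List.isChain_singleton _, ?_⟩
        intro x hx y hy
        have hyτ : ((m - 1, n - 1) : ℕ × ℕ) = y := by simpa using hy
        subst hyτ
        exact hjoin x hx _ (by simp)
      · intro x hx y hy
        rw [Option.mem_def] at hx hy
        -- x is the last of (0,0) :: B' = last of l = t ; y is head of A ++ [τ] = s
        have hxt : x = t := by
          obtain ⟨w, hw⟩ := Option.isSome_iff_exists.1
            (List.getLast?_isSome.2 (show ((0,0) :: B') ≠ [] by simp))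
          have h1 : (A ++ (m - 1, n - 1) :: (0, 0) :: B').getLast? = ((0, 0) :: B').getLast? := by
            rw [List.getLast?_append, List.getLast?_cons_cons, hw]
            rfl
          rw [h1] at hl
          exact Option.some.inj (hx.symm.trans hl)
        have hys : y = s := by
          cases A with
          | nil =>
            simp only [List.nil_append, List.head?_cons] at hy hh
            rw [← Option.some.inj hy]
            exact Option.some.inj hh
          | cons a A' =>
            simp only [List.cons_append, List.head?_cons] at hy hh
            rw [← Option.some.inj hy]
            exact Option.some.inj hh
        rw [hxt, hys]
        exact hedge
    · intro s'
      rw [hcov s']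
      exact hperm.mem_iff
    · simp
  
end ProjBoard
end

section
/- Suppose m, n ≥ 3 and S_a ∪ S_b (with a ≤ b and a+b = m+n−3) is the terminal diagonal of a hamiltonian path H in the m×n projective checkerboard B(m,n). Let (p,q) be a square in S_{b+1}. Then, following H forward from (p,q), the path eventually reaches a square of S_a, and the first square of S_a reached after (p,q) is the inverse of (p,q), namely (m−1−p, n−1−q). -/
namespace ProjBoard

/-! ### Auxiliary machinery -/

/-- The inverse (antipodal) square. -/
def invSq (m n : ℕ) (s : ℕ × ℕ) : ℕ × ℕ := (m - 1 - s.1, n - 1 - s.2)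

lemma sq_invSq {m n : ℕ} (hm : 1 ≤ m) (hn : 1 ≤ n) (s : ℕ × ℕ) :
    Sq m n (invSq m n s) := by
  unfold invSq Sq; constructor <;> simp <;> omega

lemma invSq_invSq {m n : ℕ} {s : ℕ × ℕ} (hs : Sq m n s) : invSq m n (invSq m n s) = s := by
  obtain ⟨h1, h2⟩ := hs
  unfold invSq
  ext <;> simp <;> omega

lemma sum_invSq {m n : ℕ} {s : ℕ × ℕ} (hs : Sq m n s) :
    (invSq m n s).1 + (invSq m n s).2 + (s.1 + s.2) = m + n - 2 := by
  obtain ⟨h1, h2⟩ := hs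
  unfold invSq; simp; omega

lemma sum_le_of_sq {m n : ℕ} {s : ℕ × ℕ} (hs : Sq m n s) : s.1 + s.2 ≤ m + n - 2 := by
  obtain ⟨h1, h2⟩ := hs; omega

/-- Every edge target is a valid square. -/
lemma edge_sq_right {m n : ℕ} (hm : 3 ≤ m) (hn : 3 ≤ n) {s t : ℕ × ℕ}
    (h : Edge m n s t) : Sq m n t := by
  obtain ⟨⟨h1, h2⟩, hE | hN⟩ := h
  · subst hE; unfold moveE; split <;> constructor <;> simp <;> omega
  · subst hN; unfold moveN; split <;> constructor <;> simp <;> omega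

/-- Out-structure of an edge: either a wrap to the inverse square, or a unit step. -/
lemma edge_out {m n : ℕ} (hm : 3 ≤ m) (hn : 3 ≤ n) {s t : ℕ × ℕ}
    (h : Edge m n s t) :
    t = invSq m n s ∨ ((t = (s.1 + 1, s.2) ∨ t = (s.1, s.2 + 1)) ∧ t.1 + t.2 = s.1 + s.2 + 1) := by
  obtain ⟨⟨h1, h2⟩, hE | hN⟩ := h
  · subst hE; unfold moveE
    split
    · right; exact ⟨Or.inl rfl, by simp <;> omega⟩
    · left; unfold invSq; ext <;> simp <;> omega
  · subst hN; unfold moveN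
    split
    · right; exact ⟨Or.inr rfl, by simp <;> omega⟩
    · left; unfold invSq; ext <;> simp <;> omega

/-- In-structure of an edge: the source is west neighbour, south neighbour, or the inverse. -/
lemma edge_sources {m n : ℕ} (hm : 3 ≤ m) (hn : 3 ≤ n) {s t : ℕ × ℕ}
    (h : Edge m n s t) :
    (1 ≤ t.1 ∧ s = (t.1 - 1, t.2)) ∨ (1 ≤ t.2 ∧ s = (t.1, t.2 - 1)) ∨ s = invSq m n t := by
  obtain ⟨⟨h1, h2⟩, hE | hN⟩ := h
  · subst hE; unfold moveE
    split
    · left; constructor; · simp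
      ext <;> simp
    · right; right; unfold invSq; ext <;> simp <;> omega
  · subst hN; unfold moveN
    split
    · right; left; constructor; · simp
      ext <;> simp
    · right; right; unfold invSq; ext <;> simp <;> omega

/-! ### Path lemmas -/

section PathLemmas

variable {m n : ℕ} {l : List (ℕ × ℕ)}

lemma ham_edge (hl : IsHamPath m n l) {i : ℕ} {s t : ℕ × ℕ}
    (h1 : l[i]? = some s) (h2 : l[i+1]? = some t) : Edge m n s t := by
  rw [List.getElem?_eq_some_iff] at h1 h2
  obtain ⟨hi, rfl⟩ := h1; obtain ⟨hj, rfl⟩ := h2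
  have := List.IsChain.getElem hl.1 i (by omega)
  simpa [List.get_eq_getElem] using this

lemma ham_sq (hl : IsHamPath m n l) {i : ℕ} {s : ℕ × ℕ}
    (h1 : l[i]? = some s) : Sq m n s := by
  rw [List.getElem?_eq_some_iff] at h1
  obtain ⟨hi, rfl⟩ := h1
  exact (hl.2.2 _).mpr (List.getElem_mem hi)

lemma ham_index_unique (hl : IsHamPath m n l) {i j : ℕ} {s : ℕ × ℕ}
    (h1 : l[i]? = some s) (h2 : l[j]? = some s) : i = j := by
  rw [List.getElem?_eq_some_iff] at h1 h2
  obtain ⟨hi, e1⟩ := h1; obtain ⟨hj, e2⟩ := h2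
  exact (List.Nodup.getElem_inj_iff hl.2.1).mp (e1.trans e2.symm)

lemma ham_mem (hl : IsHamPath m n l) {s : ℕ × ℕ} (hs : Sq m n s) :
    ∃ i : ℕ, l[i]? = some s := by
  have := (hl.2.2 s).mp hs
  obtain ⟨i, hi, e⟩ := List.mem_iff_getElem.mp this
  exact ⟨i, by rw [List.getElem?_eq_getElem hi, e]⟩

-- ham_succ
lemma ham_succ (hl : IsHamPath m n l) {τ : ℕ × ℕ} (hτ : l.getLast? = some τ)
    {i : ℕ} {s : ℕ × ℕ} (h1 : l[i]? = some s) (hs : s ≠ τ) :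
    ∃ t : ℕ × ℕ, l[i+1]? = some t := by
  rw [List.getElem?_eq_some_iff] at h1
  obtain ⟨hi, rfl⟩ := h1
  rcases Nat.lt_or_ge (i+1) l.length with h | h
  · exact ⟨l[i+1], List.getElem?_eq_getElem h⟩
  · exfalso
    have hi' : i = l.length - 1 := by omega
    rw [List.getLast?_eq_getElem?] at hτ
    apply hs
    have : l[l.length - 1]? = some l[i] := by
      rw [← hi']; exact List.getElem?_eq_getElem hi
    rw [this] at hτ; exact (Option.some_inj.mp hτ)

lemma ham_pred {i : ℕ} {s : ℕ × ℕ}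
    (h1 : l[i+1]? = some s) : ∃ t, l[i]? = some t := by
  rw [List.getElem?_eq_some_iff] at h1
  obtain ⟨hi, rfl⟩ := h1
  exact ⟨l[i], List.getElem?_eq_getElem (by omega)⟩

end PathLemmas

/-! ### The counting argument: the level of the initial square -/

section Counting

variable {m n : ℕ} {l : List (ℕ × ℕ)}

/-- number of squares on subdiagonal `s` -/
def cardS (m n s : ℕ) : ℕ :=
  ((Finset.range m ×ˢ Finset.range n).filter (fun σ => σ.1 + σ.2 = s)).card

lemma cardS_zero (hm : 1 ≤ m) (hn : 1 ≤ n) : cardS m n 0 = 1 := by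
  unfold cardS
  have : (Finset.range m ×ˢ Finset.range n).filter (fun σ => σ.1 + σ.2 = 0) = {((0:ℕ),(0:ℕ))} := by
    ext σ; simp [Finset.mem_filter, Finset.mem_product, Prod.ext_iff]; omega
  rw [this]; rfl

lemma cardS_top (hm : 1 ≤ m) (hn : 1 ≤ n) : cardS m n (m + n - 2) = 1 := by
  unfold cardS
  have : (Finset.range m ×ˢ Finset.range n).filter (fun σ => σ.1 + σ.2 = m + n - 2)
      = {((m-1:ℕ),(n-1:ℕ))} := by
    ext σ; simp [Finset.mem_filter, Finset.mem_product, Prod.ext_iff]; omega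
  rw [this]; rfl

lemma cardS_symm (hm : 1 ≤ m) (hn : 1 ≤ n) {s : ℕ} (hs : s ≤ m + n - 2) :
    cardS m n s = cardS m n (m + n - 2 - s) := by
  unfold cardS
  apply Finset.card_bij (fun σ _ => invSq m n σ)
  · intro σ hσ
    simp [Finset.mem_filter, Finset.mem_product] at hσ ⊢
    unfold invSq; simp; omega
  · intro σ1 h1 σ2 h2 he
    simp [Finset.mem_filter, Finset.mem_product] at h1 h2
    have e1 : invSq m n (invSq m n σ1) = σ1 := invSq_invSq ⟨h1.1.1, h1.1.2⟩
    have e2 : invSq m n (invSq m n σ2) = σ2 := invSq_invSq ⟨h2.1.1, h2.1.2⟩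
    rw [← e1, ← e2, he]
  · intro σ hσ
    simp [Finset.mem_filter, Finset.mem_product] at hσ
    refine ⟨invSq m n σ, ?_, ?_⟩
    · simp [Finset.mem_filter, Finset.mem_product]
      unfold invSq; simp; omega
    · exact invSq_invSq ⟨hσ.1.1, hσ.1.2⟩

variable {m n : ℕ} {l : List (ℕ × ℕ)}

/-- the square at index `i` -/
def fIdx (l : List (ℕ × ℕ)) (i : ℕ) : ℕ × ℕ := (l[i]?).getD (0,0)

lemma fIdx_spec {i : ℕ} (h : i < l.length) : l[i]? = some (fIdx l i) := by
  unfold fIdx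
  rw [List.getElem?_eq_getElem h]
  rfl

/-- indices from which the path takes a wrap move out of subdiagonal `s` -/
def Wrp (m n : ℕ) (l : List (ℕ × ℕ)) (s : ℕ) : Finset ℕ :=
  (Finset.range (l.length - 1)).filter
    (fun i => (fIdx l i).1 + (fIdx l i).2 = s ∧ fIdx l (i+1) = invSq m n (fIdx l i))

/-- indices from which the path takes a step move out of subdiagonal `s` -/
def Stp (m n : ℕ) (l : List (ℕ × ℕ)) (s : ℕ) : Finset ℕ :=
  (Finset.range (l.length - 1)).filter
    (fun i => (fIdx l i).1 + (fIdx l i).2 = s ∧ fIdx l (i+1) ≠ invSq m n (fIdx l i))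

/-- indices of wrap moves into subdiagonal `s` -/
def WrpIn (m n : ℕ) (l : List (ℕ × ℕ)) (s : ℕ) : Finset ℕ :=
  (Finset.range (l.length - 1)).filter
    (fun i => (fIdx l (i+1)).1 + (fIdx l (i+1)).2 = s ∧ fIdx l (i+1) = invSq m n (fIdx l i))

/-- indices of step moves into subdiagonal `s` -/
def StpIn (m n : ℕ) (l : List (ℕ × ℕ)) (s : ℕ) : Finset ℕ :=
  (Finset.range (l.length - 1)).filter
    (fun i => (fIdx l (i+1)).1 + (fIdx l (i+1)).2 = s ∧ fIdx l (i+1) ≠ invSq m n (fIdx l i))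

lemma cardA (hl : IsHamPath m n l) (s : ℕ) :
    ((Finset.range l.length).filter (fun i => (fIdx l i).1 + (fIdx l i).2 = s)).card
      = cardS m n s := by
  unfold cardS
  apply Finset.card_bij (fun i _ => fIdx l i)
  · intro i hi
    simp only [Finset.mem_filter, Finset.mem_range] at hi
    have hsq := ham_sq hl (fIdx_spec hi.1)
    simp only [Finset.mem_filter, Finset.mem_product, Finset.mem_range]
    exact ⟨⟨hsq.1, hsq.2⟩, hi.2⟩
  · intro i hi j hj he
    simp only [Finset.mem_filter, Finset.mem_range] at hi hj
    exact ham_index_unique hl (fIdx_spec hi.1) (he ▸ fIdx_spec hj.1)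
  · intro σ hσ
    simp only [Finset.mem_filter, Finset.mem_product, Finset.mem_range] at hσ
    obtain ⟨i, hi⟩ := ham_mem hl (⟨hσ.1.1, hσ.1.2⟩ : Sq m n σ)
    have hilen : i < l.length := by
      rw [List.getElem?_eq_some_iff] at hi; exact hi.1
    have hf : fIdx l i = σ := by
      have := fIdx_spec hilen; rw [hi] at this; exact (Option.some_inj.mp this).symm
    refine ⟨i, ?_, hf⟩
    simp only [Finset.mem_filter, Finset.mem_range]
    exact ⟨hilen, by rw [hf, hσ.2]⟩

lemma out_eq (hl : IsHamPath m n l) {τ : ℕ × ℕ} (hτ : l.getLast? = some τ)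
    (hN : 1 ≤ l.length) (s : ℕ) :
    cardS m n s = (Stp m n l s).card + (Wrp m n l s).card
      + (if τ.1 + τ.2 = s then 1 else 0) := by
  rw [← cardA hl s]
  have hfτ : fIdx l (l.length - 1) = τ := by
    rw [List.getLast?_eq_getElem?] at hτ
    have := fIdx_spec (show l.length - 1 < l.length by omega)
    rw [hτ] at this; exact (Option.some_inj.mp this).symm
  have hsplit : Finset.range l.length
      = insert (l.length - 1) (Finset.range (l.length - 1)) := by
    have : l.length = (l.length - 1) + 1 := by omega
    rw [this, Finset.range_add_one]
    congr 1 <;> omega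
  rw [hsplit, Finset.filter_insert]
  have hnot : l.length - 1 ∉ Finset.range (l.length - 1) := by simp
  have hrest : ((Finset.range (l.length - 1)).filter
      (fun i => (fIdx l i).1 + (fIdx l i).2 = s)).card
      = (Stp m n l s).card + (Wrp m n l s).card := by
    unfold Stp Wrp
    rw [← Finset.filter_filter, ← Finset.filter_filter]
    rw [add_comm]
    exact (Finset.card_filter_add_card_filter_not
      (s := (Finset.range (l.length - 1)).filter fun i => (fIdx l i).1 + (fIdx l i).2 = s)
      (p := fun i => fIdx l (i+1) = invSq m n (fIdx l i))).symm
  split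
  · rename_i hcond
    rw [hfτ] at hcond
    rw [Finset.card_insert_of_notMem (by simpa using hnot), hrest, if_pos hcond]
  · rename_i hcond
    rw [hfτ] at hcond
    rw [hrest, if_neg hcond]
    omega

lemma in_eq (hl : IsHamPath m n l) (hN : 1 ≤ l.length) (s : ℕ) :
    cardS m n s = (StpIn m n l s).card + (WrpIn m n l s).card
      + (if (fIdx l 0).1 + (fIdx l 0).2 = s then 1 else 0) := by
  rw [← cardA hl s]
  have hsplit := Finset.card_filter_add_card_filter_not
    (s := (Finset.range l.length).filter (fun i => (fIdx l i).1 + (fIdx l i).2 = s))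
    (p := fun i => i = 0)
  rw [← hsplit]
  have h0 : (((Finset.range l.length).filter
      (fun i => (fIdx l i).1 + (fIdx l i).2 = s)).filter (fun i => i = 0)).card
      = (if (fIdx l 0).1 + (fIdx l 0).2 = s then 1 else 0) := by
    split
    · rename_i hc
      have : ((Finset.range l.length).filter
          (fun i => (fIdx l i).1 + (fIdx l i).2 = s)).filter (fun i => i = 0) = {0} := by
        ext j
        simp only [Finset.mem_filter, Finset.mem_range, Finset.mem_singleton]
        constructor
        · rintro ⟨_, hj⟩; exact hj
        · rintro rfl; exact ⟨⟨by omega, hc⟩, rfl⟩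
      rw [this]; rfl
    · rename_i hc
      have : ((Finset.range l.length).filter
          (fun i => (fIdx l i).1 + (fIdx l i).2 = s)).filter (fun i => i = 0) = ∅ := by
        ext j
        simp only [Finset.mem_filter, Finset.mem_range, Finset.notMem_empty, iff_false]
        rintro ⟨⟨_, hlv⟩, rfl⟩
        exact hc hlv
      rw [this]; rfl
  have h1 : (((Finset.range l.length).filter
      (fun i => (fIdx l i).1 + (fIdx l i).2 = s)).filter (fun i => ¬ i = 0)).card
      = (StpIn m n l s).card + (WrpIn m n l s).card := by
    have hbij : (((Finset.range l.length).filter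
        (fun i => (fIdx l i).1 + (fIdx l i).2 = s)).filter (fun i => ¬ i = 0)).card
        = ((Finset.range (l.length - 1)).filter
            (fun i => (fIdx l (i+1)).1 + (fIdx l (i+1)).2 = s)).card := by
      apply Finset.card_bij (fun i _ => i - 1)
      · intro i hi
        simp only [Finset.mem_filter, Finset.mem_range] at hi ⊢
        obtain ⟨⟨hilen, hlv⟩, hne⟩ := hi
        have : i - 1 + 1 = i := by omega
        rw [this]
        exact ⟨by omega, hlv⟩
      · intro i hi j hj he
        simp only [Finset.mem_filter, Finset.mem_range] at hi hj
        omega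
      · intro j hj
        simp only [Finset.mem_filter, Finset.mem_range] at hj ⊢
        exact ⟨j + 1, ⟨⟨by omega, hj.2⟩, by omega⟩, by omega⟩
    rw [hbij]
    unfold StpIn WrpIn
    rw [← Finset.filter_filter, ← Finset.filter_filter]
    rw [add_comm]
    exact (Finset.card_filter_add_card_filter_not
      (s := (Finset.range (l.length - 1)).filter
        (fun i => (fIdx l (i+1)).1 + (fIdx l (i+1)).2 = s))
      (p := fun i => fIdx l (i+1) = invSq m n (fIdx l i))).symm
  rw [h0, h1]
  omega

lemma edge_at (hl : IsHamPath m n l) {i : ℕ} (h : i < l.length - 1) :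
    Edge m n (fIdx l i) (fIdx l (i+1)) :=
  ham_edge hl (fIdx_spec (by omega)) (fIdx_spec (by omega))

lemma StpIn_succ (hm : 3 ≤ m) (hn : 3 ≤ n) (hl : IsHamPath m n l) (s : ℕ) :
    StpIn m n l (s+1) = Stp m n l s := by
  unfold StpIn Stp
  apply Finset.filter_congr
  intro i hi
  simp only [Finset.mem_range] at hi
  have he := edge_at hl hi
  rcases edge_out hm hn he with hw | ⟨_, hsum⟩
  · constructor
    · rintro ⟨_, h2⟩; exact absurd hw h2
    · rintro ⟨_, h2⟩; exact absurd hw h2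
  · constructor
    · rintro ⟨h1, h2⟩; exact ⟨by omega, h2⟩
    · rintro ⟨h1, h2⟩; exact ⟨by omega, h2⟩

lemma StpIn_zero (hm : 3 ≤ m) (hn : 3 ≤ n) (hl : IsHamPath m n l) :
    StpIn m n l 0 = ∅ := by
  unfold StpIn
  ext i
  simp only [Finset.mem_filter, Finset.mem_range, Finset.notMem_empty, iff_false]
  rintro ⟨hi, hlv, hnw⟩
  have he := edge_at hl hi
  rcases edge_out hm hn he with hw | ⟨_, hsum⟩
  · exact hnw hw
  · omega

lemma WrpIn_eq (hm : 3 ≤ m) (hn : 3 ≤ n) (hl : IsHamPath m n l) {s : ℕ}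
    (hs : s ≤ m + n - 2) :
    WrpIn m n l s = Wrp m n l (m + n - 2 - s) := by
  unfold WrpIn Wrp
  apply Finset.filter_congr
  intro i hi
  simp only [Finset.mem_range] at hi
  have hsq : Sq m n (fIdx l i) := ham_sq hl (fIdx_spec (by omega))
  constructor
  · rintro ⟨h1, h2⟩
    refine ⟨?_, h2⟩
    have := sum_invSq hsq
    rw [← h2] at this
    omega
  · rintro ⟨h1, h2⟩
    refine ⟨?_, h2⟩
    have := sum_invSq hsq
    rw [← h2] at this
    omega

lemma Stp_top (hm : 3 ≤ m) (hn : 3 ≤ n) (hl : IsHamPath m n l) :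
    Stp m n l (m + n - 2) = ∅ := by
  unfold Stp
  ext i
  simp only [Finset.mem_filter, Finset.mem_range, Finset.notMem_empty, iff_false]
  rintro ⟨hi, hlv, hnw⟩
  have he := edge_at hl hi
  have hsq2 : Sq m n (fIdx l (i+1)) := ham_sq hl (fIdx_spec (by omega))
  have hb := sum_le_of_sq hsq2
  rcases edge_out hm hn he with hw | ⟨_, hsum⟩
  · exact hnw hw
  · omega

/-- The level of the initial square of a hamiltonian path whose terminal square
lies on the diagonal `S_a ∪ S_b`. -/
lemma initial_law (hm : 3 ≤ m) (hn : 3 ≤ n) {a b : ℕ} (hab : a ≤ b)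
    (habsum : a + b = m + n - 3) (hl : IsHamPath m n l) {τ : ℕ × ℕ}
    (hτ : l.getLast? = some τ) (hterm : τ.1 + τ.2 = a ∨ τ.1 + τ.2 = b) :
    ∃ ι0 : ℕ × ℕ, l[0]? = some ι0 ∧ (ι0.1 + ι0.2 = a + 1 ∨ ι0.1 + ι0.2 = b + 1) := by
  have hN : 1 ≤ l.length := by
    obtain ⟨i, hi⟩ := ham_mem hl (show Sq m n (0,0) by constructor <;> simp <;> omega)
    obtain ⟨hlen, -⟩ := List.getElem?_eq_some_iff.mp hi
    omega
  have h0 := fIdx_spec (l := l) (i := 0) (by omega)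
  refine ⟨fIdx l 0, h0, ?_⟩
  set u0 := (fIdx l 0).1 + (fIdx l 0).2 with hu0def
  have hu0M : u0 ≤ m + n - 2 := sum_le_of_sq (ham_sq hl h0)
  have hτM : ¬ (τ.1 + τ.2 = m + n - 2) := by rcases hterm with h | h <;> omega
  -- Step 1 : u0 ≠ 0
  have hu0pos : 1 ≤ u0 := by
    by_contra hc
    have hu00 : u0 = 0 := by omega
    have h1 := in_eq hl hN 0
    rw [StpIn_zero hm hn hl, WrpIn_eq hm hn hl (show (0:ℕ) ≤ m + n - 2 by omega),
      Nat.sub_zero, cardS_zero (by omega) (by omega), if_pos hu00] at h1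
    have h2 := out_eq hl hτ hN (m + n - 2)
    rw [Stp_top hm hn hl, cardS_top (by omega) (by omega), if_neg hτM] at h2
    simp only [Finset.card_empty] at h1 h2
    omega
  -- Step 2 : the symmetric counting identity at s = u0 - 1
  have e1 := in_eq hl hN u0
  rw [show u0 = (u0 - 1) + 1 by omega, StpIn_succ hm hn hl,
    WrpIn_eq hm hn hl (show u0 - 1 + 1 ≤ m + n - 2 by omega)] at e1
  have e2 := out_eq hl hτ hN (u0 - 1)
  have e3 := in_eq hl hN (m + n - 2 - u0 + 1)
  rw [StpIn_succ hm hn hl,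
    WrpIn_eq hm hn hl (show m + n - 2 - u0 + 1 ≤ m + n - 2 by omega),
    show m + n - 2 - (m + n - 2 - u0 + 1) = u0 - 1 by omega] at e3
  have e4 := out_eq hl hτ hN (m + n - 2 - u0)
  have c1 : cardS m n ((u0 - 1) + 1) = cardS m n (m + n - 2 - u0) := by
    rw [show (u0 - 1) + 1 = u0 by omega]
    exact cardS_symm (by omega) (by omega) hu0M
  have c2 : cardS m n (u0 - 1) = cardS m n (m + n - 2 - u0 + 1) := by
    rw [cardS_symm (m := m) (n := n) (by omega) (by omega)
      (show u0 - 1 ≤ m + n - 2 by omega), show m + n - 2 - (u0 - 1) = m + n - 2 - u0 + 1 by omega]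
  rw [if_pos (show u0 = (u0 - 1) + 1 by omega)] at e1
  rw [show m + n - 2 - (u0 - 1 + 1) = m + n - 2 - u0 by omega] at e1
  by_cases hA : τ.1 + τ.2 = u0 - 1
  · omega
  · by_cases hB : τ.1 + τ.2 = m + n - 2 - u0
    · omega
    · exfalso
      rw [if_neg hA] at e2
      rw [if_neg hB] at e4
      by_cases hC : u0 = m + n - 2 - u0 + 1
      · rw [if_pos hC] at e3; omega
      · rw [if_neg hC] at e3; omega

end Counting

/-! ### The cascade (march) lemmas -/

section March

variable {m n a b : ℕ} {l : List (ℕ × ℕ)}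

/-- Bundled context for the cascade argument. -/
structure Ctx (m n a b : ℕ) (l : List (ℕ × ℕ)) : Prop where
  hm : 3 ≤ m
  hn : 3 ≤ n
  hab : a ≤ b
  habsum : a + b = m + n - 3
  hl : IsHamPath m n l
  hu0 : ∀ ι0 : ℕ × ℕ, l[0]? = some ι0 →
    a + 1 ≤ ι0.1 + ι0.2 ∧ ι0.1 + ι0.2 ≤ b + 1

lemma Ctx.not_zero (C : Ctx m n a b l) {r : ℕ} {s : ℕ × ℕ}
    (h : l[r]? = some s) (hlow : s.1 + s.2 ≤ a ∨ b + 2 ≤ s.1 + s.2) : r ≠ 0 := by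
  rintro rfl
  have := C.hu0 s h
  omega

/-- The eastward cascade: marching toward the south-east corner. -/
lemma marchE (C : Ctx m n a b l) :
    ∀ β α : ℕ, α + β + 1 ≤ a →
    (∃ r : ℕ, l[r]? = some (α, β) ∧ l[r+1]? = some (α, β+1)) →
    (∃ (r : ℕ) (V : ℕ × ℕ), l[r]? = some (m-1-α, n-2-β) ∧ l[r+1]? = some V ∧
      V ≠ (m-1-α, n-1-β)) →
    False := by
  intro β
  induction β using Nat.strong_induction_on with
  | _ β IH =>
    intro α hsum H1 H2
    obtain ⟨r1, hz, hzR⟩ := H1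
    obtain ⟨r2, V, hX, hXV, hVne⟩ := H2
    have hsqz : Sq m n (α, β) := ham_sq C.hl hz
    have hα : α < m := hsqz.1
    have hβ : β < n := hsqz.2
    have hm := C.hm
    have hn := C.hn
    have hab := C.hab
    have habsum := C.habsum
    -- the high square P
    have hsqP : Sq m n (m-1-α, n-1-β) := ⟨by simp; omega, by simp; omega⟩
    obtain ⟨rP, hP⟩ := ham_mem C.hl hsqP
    have hrP : rP ≠ 0 := C.not_zero hP (by simp; omega)
    obtain ⟨rP', rfl⟩ : ∃ k, rP = k + 1 := ⟨rP - 1, by omega⟩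
    obtain ⟨W, hW⟩ := ham_pred hP
    have hedge := ham_edge C.hl hW hP
    rcases edge_sources C.hm C.hn hedge with ⟨hg, hWeq⟩ | ⟨hg, hWeq⟩ | hWeq
    · -- W = Q = (m-2-α, n-1-β) : continue with the B-step
      simp only at hg
      have hα2 : α ≤ m - 2 := by omega
      have hWQ : W = (m-2-α, n-1-β) := by
        rw [hWeq]; simp [Prod.ext_iff]; omega
      rw [hWQ] at hW
      -- the low square R = (α+1, β)
      have hsqR : Sq m n (α+1, β) := ⟨by simp; omega, by simp; omega⟩
      obtain ⟨rR, hR⟩ := ham_mem C.hl hsqR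
      have hrR : rR ≠ 0 := C.not_zero hR (by simp; omega)
      obtain ⟨rR', rfl⟩ : ∃ k, rR = k + 1 := ⟨rR - 1, by omega⟩
      obtain ⟨W', hW'⟩ := ham_pred hR
      have hedge' := ham_edge C.hl hW' hR
      rcases edge_sources C.hm C.hn hedge' with ⟨hg', hWeq'⟩ | ⟨hg', hWeq'⟩ | hWeq'
      · -- W' = (α, β) : contradiction with H1
        have : W' = (α, β) := by rw [hWeq']; simp
        rw [this] at hW'
        have := ham_index_unique C.hl hz hW'
        subst this
        rw [hR] at hzR
        have := Option.some_inj.mp hzR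
        simp [Prod.ext_iff] at this
      · -- W' = (α+1, β-1) : recurse
        simp only at hg'
        have hβ1 : 1 ≤ β := hg'
        have hWz' : W' = (α+1, β-1) := by rw [hWeq']
        rw [hWz'] at hW'
        refine IH (β-1) (by omega) (α+1) (by omega) ⟨rR', hW', ?_⟩
          ⟨rP', ⟨(m-1-α, n-1-β), ?_, hP, ?_⟩⟩
        · rw [show β - 1 + 1 = β by omega]; exact hR
        · rw [show m-1-(α+1) = m-2-α by omega, show n-2-(β-1) = n-1-β by omega]
          exact hW
        · simp [Prod.ext_iff]; omega
      · -- W' = invSq (α+1, β) = Q : contradiction, P = R impossible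
        have hinv : invSq m n (α+1, β) = (m-2-α, n-1-β) := by
          unfold invSq; simp [Prod.ext_iff]; omega
        rw [hWeq', hinv] at hW'
        have := ham_index_unique C.hl hW hW'
        subst this
        rw [hR] at hP
        have := Option.some_inj.mp hP
        simp [Prod.ext_iff] at this
        omega
    · -- W = X = (m-1-α, n-2-β) : contradiction with H2
      simp only at hg
      have hWX : W = (m-1-α, n-2-β) := by
        rw [hWeq]; simp [Prod.ext_iff]; omega
      rw [hWX] at hW
      have := ham_index_unique C.hl hX hW
      subst this
      rw [hP] at hXV
      exact hVne (Option.some_inj.mp hXV).symm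
    · -- W = invSq P = (α, β) : contradiction with H1 (levels)
      have hinv : invSq m n (m-1-α, n-1-β) = (α, β) := by
        unfold invSq; simp [Prod.ext_iff]; omega
      rw [hWeq, hinv] at hW
      have := ham_index_unique C.hl hz hW
      subst this
      rw [hP] at hzR
      have := Option.some_inj.mp hzR
      simp [Prod.ext_iff] at this
      omega

/-- The northward cascade: marching toward the north-west corner. -/
lemma marchN (C : Ctx m n a b l) :
    ∀ α β : ℕ, α + β + 1 ≤ a →
    (∃ r : ℕ, l[r]? = some (α, β) ∧ l[r+1]? = some (α+1, β)) →
    (∃ (r : ℕ) (V : ℕ × ℕ), l[r]? = some (m-2-α, n-1-β) ∧ l[r+1]? = some V ∧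
      V ≠ (m-1-α, n-1-β)) →
    False := by
  intro α
  induction α using Nat.strong_induction_on with
  | _ α IH =>
    intro β hsum H1 H2
    obtain ⟨r1, hz, hzR⟩ := H1
    obtain ⟨r2, V, hX, hXV, hVne⟩ := H2
    have hsqz : Sq m n (α, β) := ham_sq C.hl hz
    have hα : α < m := hsqz.1
    have hβ : β < n := hsqz.2
    have hm := C.hm
    have hn := C.hn
    have hab := C.hab
    have habsum := C.habsum
    have hsqP : Sq m n (m-1-α, n-1-β) := ⟨by simp; omega, by simp; omega⟩
    obtain ⟨rP, hP⟩ := ham_mem C.hl hsqP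
    have hrP : rP ≠ 0 := C.not_zero hP (by simp; omega)
    obtain ⟨rP', rfl⟩ : ∃ k, rP = k + 1 := ⟨rP - 1, by omega⟩
    obtain ⟨W, hW⟩ := ham_pred hP
    have hedge := ham_edge C.hl hW hP
    rcases edge_sources C.hm C.hn hedge with ⟨hg, hWeq⟩ | ⟨hg, hWeq⟩ | hWeq
    · -- W = X = (m-2-α, n-1-β) : contradiction with H2
      simp only at hg
      have hWX : W = (m-2-α, n-1-β) := by
        rw [hWeq]; simp [Prod.ext_iff]; omega
      rw [hWX] at hW
      have := ham_index_unique C.hl hX hW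
      subst this
      rw [hP] at hXV
      exact hVne (Option.some_inj.mp hXV).symm
    · -- W = Q = (m-1-α, n-2-β) : continue with the B-step
      simp only at hg
      have hβ2 : β ≤ n - 2 := by omega
      have hWQ : W = (m-1-α, n-2-β) := by
        rw [hWeq]; simp [Prod.ext_iff]; omega
      rw [hWQ] at hW
      have hsqR : Sq m n (α, β+1) := ⟨by simp; omega, by simp; omega⟩
      obtain ⟨rR, hR⟩ := ham_mem C.hl hsqR
      have hrR : rR ≠ 0 := C.not_zero hR (by simp; omega)
      obtain ⟨rR', rfl⟩ : ∃ k, rR = k + 1 := ⟨rR - 1, by omega⟩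
      obtain ⟨W', hW'⟩ := ham_pred hR
      have hedge' := ham_edge C.hl hW' hR
      rcases edge_sources C.hm C.hn hedge' with ⟨hg', hWeq'⟩ | ⟨hg', hWeq'⟩ | hWeq'
      · -- W' = (α-1, β+1) : recurse
        simp only at hg'
        have hα1 : 1 ≤ α := hg'
        have hWz' : W' = (α-1, β+1) := by rw [hWeq']
        rw [hWz'] at hW'
        refine IH (α-1) (by omega) (β+1) (by omega) ⟨rR', hW', ?_⟩
          ⟨rP', ⟨(m-1-α, n-1-β), ?_, hP, ?_⟩⟩
        · rw [show α - 1 + 1 = α by omega]; exact hR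
        · rw [show m-2-(α-1) = m-1-α by omega, show n-1-(β+1) = n-2-β by omega]
          exact hW
        · simp [Prod.ext_iff]; omega
      · -- W' = (α, β) : contradiction with H1
        have : W' = (α, β) := by rw [hWeq']; simp
        rw [this] at hW'
        have := ham_index_unique C.hl hz hW'
        subst this
        rw [hR] at hzR
        have h2 := (Prod.ext_iff.mp (Option.some_inj.mp hzR)).1
        simp at h2
      · -- W' = invSq (α, β+1) = Q : contradiction, P = R impossible
        have hinv : invSq m n (α, β+1) = (m-1-α, n-2-β) := by
          unfold invSq; simp [Prod.ext_iff]; omega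
        rw [hWeq', hinv] at hW'
        have := ham_index_unique C.hl hW hW'
        subst this
        rw [hR] at hP
        have := Option.some_inj.mp hP
        simp [Prod.ext_iff] at this
        omega
    · -- W = invSq P = (α, β) : contradiction with H1 (levels)
      have hinv : invSq m n (m-1-α, n-1-β) = (α, β) := by
        unfold invSq; simp [Prod.ext_iff]; omega
      rw [hWeq, hinv] at hW
      have := ham_index_unique C.hl hz hW
      subst this
      rw [hP] at hzR
      have := Option.some_inj.mp hzR
      simp [Prod.ext_iff] at this
      omega

/-- The mirror edge: every step edge at level `≥ b+1` forces the inverse edge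
further along the path. -/
lemma cascade (C : Ctx m n a b l) {x y : ℕ × ℕ} {i : ℕ}
    (hx : l[i]? = some x) (hy : l[i+1]? = some y)
    (hb1 : b + 1 ≤ x.1 + x.2)
    (hstep : y = (x.1+1, x.2) ∨ y = (x.1, x.2+1)) :
    ∃ r : ℕ, l[r]? = some (invSq m n y) ∧ l[r+1]? = some (invSq m n x) := by
  by_contra hgoal
  push_neg at hgoal
  obtain ⟨p, q⟩ := x
  have hsqx : Sq m n (p, q) := ham_sq C.hl hx
  have hsqy : Sq m n y := ham_sq C.hl hy
  have hp : p < m := hsqx.1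
  have hq : q < n := hsqx.2
  have hm := C.hm
  have hn := C.hn
  have hab := C.hab
  have habsum := C.habsum
  simp only at hb1
  -- the square invSq x
  have hsqI : Sq m n (m-1-p, n-1-q) := ⟨by simp; omega, by simp; omega⟩
  obtain ⟨rI, hI⟩ := ham_mem C.hl hsqI
  have hrI : rI ≠ 0 := C.not_zero hI (by simp; omega)
  obtain ⟨r', rfl⟩ : ∃ k, rI = k + 1 := ⟨rI - 1, by omega⟩
  obtain ⟨W, hW⟩ := ham_pred hI
  have hedge := ham_edge C.hl hW hI
  rcases hstep with hyE | hyN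
  · -- eastward step : y = (p+1, q)
    have hp2 : p ≤ m - 2 := by
      have := hsqy.1; rw [hyE] at this; simp at this; omega
    have hinvx : invSq m n (p, q) = (m-1-p, n-1-q) := rfl
    have hinvy : invSq m n y = (m-2-p, n-1-q) := by
      rw [hyE]; unfold invSq; simp [Prod.ext_iff]; omega
    rcases edge_sources C.hm C.hn hedge with ⟨hg, hWeq⟩ | ⟨hg, hWeq⟩ | hWeq
    · -- W = invSq y : this is the goal, contradiction
      refine hgoal r' ?_ ?_
      · have hWz : W = (m-2-p, n-1-q) := by rw [hWeq]; simp [Prod.ext_iff]; omega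
        rw [hinvy, ← hWz]; exact hW
      · rw [hinvx]; exact hI
    · -- W = (m-1-p, n-2-q) : run the east march
      simp only at hg
      have hq2 : q ≤ n - 2 := by omega
      have hWz : W = (m-1-p, n-2-q) := by
        rw [hWeq]; simp [Prod.ext_iff]; omega
      rw [hWz] at hW
      refine marchE C (n-2-q) (m-1-p) (by omega) ⟨r', hW, ?_⟩ ⟨i, y, ?_, hy, ?_⟩
      · rw [show n-2-q+1 = n-1-q by omega]; exact hI
      · rw [show m-1-(m-1-p) = p by omega, show n-2-(n-2-q) = q by omega]; exact hx
      · rw [hyE]; simp [Prod.ext_iff]; omega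
    · -- W = x : x would travel to invSq x, contradicting the step
      have hinv2 : invSq m n (m-1-p, n-1-q) = (p, q) := by
        unfold invSq; simp [Prod.ext_iff]; omega
      rw [hWeq, hinv2] at hW
      have := ham_index_unique C.hl hx hW
      subst this
      rw [hI] at hy
      have := Option.some_inj.mp hy
      rw [hyE] at this
      have h1 := (Prod.ext_iff.mp this).1
      have h2 := (Prod.ext_iff.mp this).2
      simp at h1 h2
      omega
  · -- northward step : y = (p, q+1)
    have hq2 : q ≤ n - 2 := by
      have := hsqy.2; rw [hyN] at this; simp at this; omega
    have hinvx : invSq m n (p, q) = (m-1-p, n-1-q) := rfl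
    have hinvy : invSq m n y = (m-1-p, n-2-q) := by
      rw [hyN]; unfold invSq; simp [Prod.ext_iff]; omega
    rcases edge_sources C.hm C.hn hedge with ⟨hg, hWeq⟩ | ⟨hg, hWeq⟩ | hWeq
    · -- W = (m-2-p, n-1-q) : run the north march
      simp only at hg
      have hp2 : p ≤ m - 2 := by omega
      have hWz : W = (m-2-p, n-1-q) := by
        rw [hWeq]; simp [Prod.ext_iff]; omega
      rw [hWz] at hW
      refine marchN C (m-2-p) (n-1-q) (by omega) ⟨r', hW, ?_⟩ ⟨i, y, ?_, hy, ?_⟩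
      · rw [show m-2-p+1 = m-1-p by omega]; exact hI
      · rw [show m-2-(m-2-p) = p by omega, show n-1-(n-1-q) = q by omega]; exact hx
      · rw [hyN]; simp [Prod.ext_iff]; omega
    · -- W = invSq y : this is the goal, contradiction
      refine hgoal r' ?_ ?_
      · rw [hinvy]
        have : W = (m-1-p, n-2-q) := by rw [hWeq]; simp [Prod.ext_iff]; omega
        rw [← this]; exact hW
      · rw [hinvx]; exact hI
    · -- W = x
      have hinv2 : invSq m n (m-1-p, n-1-q) = (p, q) := by
        unfold invSq; simp [Prod.ext_iff]; omega
      rw [hWeq, hinv2] at hW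
      have := ham_index_unique C.hl hx hW
      subst this
      rw [hI] at hy
      have := Option.some_inj.mp hy
      rw [hyN] at this
      have h1 := (Prod.ext_iff.mp this).1
      have h2 := (Prod.ext_iff.mp this).2
      simp at h1 h2
      omega

/-- Climb-and-descend: from any square at level `≥ b+1`, the path proceeds to the
inverse square, and all intermediate squares have level `> u(s)` or mirror-low. -/
lemma climb (C : Ctx m n a b l) {τ : ℕ × ℕ} (hτ : l.getLast? = some τ)
    (hterm : τ.1 + τ.2 = a ∨ τ.1 + τ.2 = b) :
    ∀ (c : ℕ) (s : ℕ × ℕ) (i : ℕ), m + n - 2 - (s.1 + s.2) ≤ c →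
    l[i]? = some s → b + 1 ≤ s.1 + s.2 →
    ∃ k, i < k ∧ l[k]? = some (invSq m n s) ∧
      ∀ j t, i < j → j < k → l[j]? = some t →
        (s.1 + s.2 < t.1 + t.2 ∨ t.1 + t.2 + (s.1 + s.2) + 3 ≤ m + n) := by
  intro c
  induction c using Nat.strong_induction_on with
  | _ c IH =>
    intro s i hc hs hb1
    have hm := C.hm
    have hn := C.hn
    have hab := C.hab
    have habsum := C.habsum
    have hsqs : Sq m n s := ham_sq C.hl hs
    have hsM : s.1 + s.2 ≤ m + n - 2 := sum_le_of_sq hsqs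
    have hsτ : s ≠ τ := by
      rintro rfl
      rcases hterm with h | h <;> omega
    obtain ⟨t0, ht0⟩ := ham_succ C.hl hτ hs hsτ
    have hedge := ham_edge C.hl hs ht0
    rcases edge_out C.hm C.hn hedge with hw | ⟨hshape, hlvl⟩
    · -- immediate wrap
      refine ⟨i+1, by omega, by rw [← hw]; exact ht0, ?_⟩
      intro j t h1 h2
      omega
    · -- step, then recurse and use the cascade
      have hsqt : Sq m n t0 := ham_sq C.hl ht0
      have htM : t0.1 + t0.2 ≤ m + n - 2 := sum_le_of_sq hsqt
      obtain ⟨k', hik', hk', hint⟩ := IH (c-1) (by omega) t0 (i+1) (by omega) ht0 (by omega)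
      obtain ⟨r, hr1, hr2⟩ := cascade C hs ht0 hb1 (by
        rcases hshape with h | h
        · left; rw [h]
        · right; rw [h])
      have : r = k' := ham_index_unique C.hl hr1 hk'
      subst this
      refine ⟨r+1, by omega, hr2, ?_⟩
      intro j t h1 h2 ht
      rcases Nat.lt_or_ge j (i+2) with hj | hj
      · -- j = i+1
        have : j = i + 1 := by omega
        subst this
        rw [ht0] at ht
        have := Option.some_inj.mp ht
        subst this
        left; omega
      · rcases Nat.lt_or_ge j r with hj2 | hj2
        · -- strictly inside the sub-climb
          have := hint j t (by omega) (by omega) ht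
          omega
        · -- j = r : the square invSq t0
          have : j = r := by omega
          subst this
          rw [hr1] at ht
          have := Option.some_inj.mp ht
          subst this
          have := sum_invSq hsqt
          right; omega

end March

theorem outerEastOK (m n a b : ℕ) (hm : 3 ≤ m) (hn : 3 ≤ n)
    (hab : a ≤ b) (habsum : a + b = m + n - 3)
    (l : List (ℕ × ℕ)) (τ : ℕ × ℕ) (hl : IsHamPath m n l) (hτ : l.getLast? = some τ)
    (hterm : τ.1 + τ.2 = a ∨ τ.1 + τ.2 = b)
    (p q : ℕ) (hpq : Sq m n (p, q)) (hsum : p + q = b + 1)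
    (i : ℕ) (hi : l[i]? = some (p, q)) :
    ∃ k, i < k ∧ l[k]? = some (m - 1 - p, n - 1 - q) ∧
      ∀ j s, i < j → j < k → l[j]? = some s → s.1 + s.2 ≠ a := by
  obtain ⟨ι0, h0, hι⟩ := initial_law hm hn hab habsum hl hτ hterm
  have C : Ctx m n a b l :=
    { hm := hm, hn := hn, hab := hab, habsum := habsum, hl := hl,
      hu0 := by
        intro ι0' h'
        rw [h0] at h'
        have := Option.some_inj.mp h'
        subst this
        rcases hι with h | h <;> omega }
  obtain ⟨k, hik, hk, hint⟩ := climb C hτ hterm (m + n - 2 - (b+1)) (p, q) i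
    (by simp; omega) hi (by simp; omega)
  refine ⟨k, hik, ?_, ?_⟩
  · exact hk
  · intro j s h1 h2 hj
    have := hint j s h1 h2 hj
    simp only at this
    omega

end ProjBoard
end
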